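/- arXiv:2005.05309 — 5 statements merged into one kernel-verified Lean document; each statement's English description precedes it below -/
import Mathlib

section
/- Let t ∈ [0,T], let f : Λ^t → ℝ be upper semicontinuous with respect to d_∞ and bounded from above, let ρ be a gauge-type function on Λ^t, let (δ_i)_{i≥0} be a sequence of positive numbers, and suppose ε > 0 and (t_0, γ⁰_{t_0}) ∈ [t,T]×Λ^t satisfy f(γ⁰_{t_0}) ≥ sup_{(s,γ_s)∈[t,T]×Λ^t} f(γ_s) − ε. Then there exist (t̂, γ̂_{t̂}) ∈ [t,T]×Λ^t and a sequence (t_i, γⁱ_{t_i})_{i≥1} ⊆ [t,T]×Λ^t such that: (i) ρ(γ⁰_{t_0}, γ̂_{t̂}) ≤ ε/δ_0, ρ(γⁱ_{t_i}, γ̂_{t̂}) ≤ ε/(2ⁱ δ_0) for every i ≥ 1, and t_i increases monotonically to t̂ as i → ∞; (ii) the series Σ_{i=0}^∞ δ_i ρ(γⁱ_{t_i}, γ̂_{t̂}) converges and f(γ̂_{t̂}) − Σ_{i=0}^∞ δ_i ρ(γⁱ_{t_i}, γ̂_{t̂}) ≥ f(γ⁰_{t_0}); (iii) for every (s, γ_s)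 ∈ [t̂,T]×Λ^{t̂} with (s,γ_s) ≠ (t̂, γ̂_{t̂}): f(γ_s) − Σ_{i=0}^∞ δ_i ρ(γⁱ_{t_i}, γ_s) < f(γ̂_{t̂}) − Σ_{i=0}^∞ δ_i ρ(γⁱ_{t_i}, γ̂_{t̂}). -/
set_option linter.unusedVariables false

noncomputable section

open Set Filter Topology

namespace PHJB

/-- Euclidean state space ℝ^d. -/
abbrev E (d : ℕ) : Type := EuclideanSpace ℝ (Fin d)

variable {d n : ℕ}

/-- `‖γ_t - η_s‖₀ = sup_{0 ≤ l ≤ t ∨ s} |γ_t(l ∧ t) - η_s(l ∧ s)|`. -/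
def pairDist (t : ℝ) (γ : ℝ → E d) (s : ℝ) (η : ℝ → E d) : ℝ :=
  sSup ((fun l => ‖γ (min l t) - η (min l s)‖) '' Icc 0 (max t s))

/-- `‖γ_t‖₀ = sup_{0 ≤ s ≤ t} |γ_t(s)|`. -/
def supNorm (t : ℝ) (γ : ℝ → E d) : ℝ :=
  sSup ((fun l => ‖γ l‖) '' Icc 0 t)

/-- `d_∞(γ_t, η_s) = |t - s| + ‖γ_t - η_s‖₀`. -/
def dInfty (t : ℝ) (γ : ℝ → E d) (s : ℝ) (η : ℝ → E d) : ℝ :=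
  |t - s| + pairDist t γ s η

/-- `γ` is càdlàg on `[0,t]`. -/
def IsCadlagOn (t : ℝ) (γ : ℝ → E d) : Prop :=
  (∀ s ∈ Ico (0:ℝ) t, ContinuousWithinAt γ (Ici s) s) ∧
  (∀ s ∈ Ioc (0:ℝ) t, ∃ L, Tendsto γ (nhdsWithin s (Iio s)) (nhds L))

/-- `γ` is continuous on `[0,t]`. -/
def IsContOn (t : ℝ) (γ : ℝ → E d) : Prop :=
  ContinuousOn γ (Icc 0 t)

/-- `(t, γ)` represents an element `γ_t` of `Λ̂^{tBase}` (horizon `T`). -/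
def MemHat (T tBase : ℝ) (t : ℝ) (γ : ℝ → E d) : Prop :=
  tBase ≤ t ∧ t ≤ T ∧ IsCadlagOn t γ

/-- `(t, γ)` represents an element `γ_t` of `Λ^{tBase}` (horizon `T`). -/
def Mem (T tBase : ℝ) (t : ℝ) (γ : ℝ → E d) : Prop :=
  tBase ≤ t ∧ t ≤ T ∧ IsContOn t γ

/-- The functional `S_m(γ_t, η_s)`. -/
def Sm (m : ℕ) (t : ℝ) (γ : ℝ → E d) (s : ℝ) (η : ℝ → E d) : ℝ :=
  if pairDist t γ s η = 0 then 0
  else (pairDist t γ s η ^ (2*m) - ‖γ t - η s‖ ^ (2*m)) ^ 3 / pairDist t γ s η ^ (4*m)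

/-- `Υ^{m,M}(γ_t, η_s) = S_m(γ_t,η_s) + M |γ_t(t) - η_s(s)|^{2m}`. -/
def Ups (m : ℕ) (M : ℝ) (t : ℝ) (γ : ℝ → E d) (s : ℝ) (η : ℝ → E d) : ℝ :=
  Sm m t γ s η + M * ‖γ t - η s‖ ^ (2*m)

/-- `Ῡ^{m,M}(γ_t, η_s) = Υ^{m,M}(γ_t,η_s) + |s - t|²`. -/
def UpsBar (m : ℕ) (M : ℝ) (t : ℝ) (γ : ℝ → E d) (s : ℝ) (η : ℝ → E d) : ℝ :=
  Ups m M t γ s η + (s - t) ^ 2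

/-- `Υ^{m,M}(γ_t) = Υ^{m,M}(γ_t, 0_t)`. -/
def Ups0 (m : ℕ) (M : ℝ) (t : ℝ) (γ : ℝ → E d) : ℝ :=
  Ups m M t γ t (fun _ => 0)

/-- Restriction of a raw function to the values it takes on `[0,t]` (the path `γ_t`,
or its horizontal extension to any later time). -/
def clamp (t : ℝ) (γ : ℝ → E d) : ℝ → E d := fun s => γ (min (max s 0) t)

/-- The horizontal extension `γ_{t,·}` of `γ_t`, as a raw function. -/
def hext (t : ℝ) (γ : ℝ → E d) : ℝ → E d := fun l => γ (min l t)

/-- The vertically bumped path `γ_t^x`. -/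
def vbump (t : ℝ) (γ : ℝ → E d) (x : E d) : ℝ → E d :=
  fun s => if s = t then γ t + x else γ s

/-- The standard basis of ℝ^d. -/
def basis (d : ℕ) (i : Fin d) : E d := EuclideanSpace.single i (1:ℝ)

/-- A path functional only depends on the restriction of the path to `[0,t]`. -/
def Adapted (T tBase : ℝ) (f : ℝ → (ℝ → E d) → ℝ) : Prop :=
  ∀ t γ, MemHat T tBase t γ → f t γ = f t (clamp t γ)

/-- `f ∈ C⁰(Λ̂^{tBase})`: continuity with respect to `d_∞`. -/
def C0Hat (T tBase : ℝ) (f : ℝ → (ℝ → E d) → ℝ) : Prop :=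
  ∀ t γ, MemHat T tBase t γ → ∀ ε > 0, ∃ δ > 0, ∀ s η, MemHat T tBase s η →
    dInfty t γ s η < δ → |f s η - f t γ| < ε

/-- `f ∈ C⁰(Λ^{tBase})`: continuity with respect to `d_∞` on continuous paths. -/
def C0Lam (T tBase : ℝ) (f : ℝ → (ℝ → E d) → ℝ) : Prop :=
  ∀ t γ, Mem T tBase t γ → ∀ ε > 0, ∃ δ > 0, ∀ s η, Mem T tBase s η →
    dInfty t γ s η < δ → |f s η - f t γ| < ε

/-- Polynomial growth in `‖·‖₀`. -/
def PolyGrowth (T tBase : ℝ) (f : ℝ → (ℝ → E d) → ℝ) : Prop :=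
  ∃ C : ℝ, ∃ k : ℕ, 0 ≤ C ∧ ∀ t γ, MemHat T tBase t γ →
    |f t γ| ≤ C * (1 + supNorm t γ) ^ k

/-- An element of `C_p^{1,2}(Λ̂^{tBase})`: a functional `F` together with its
horizontal derivative `Ft`, and first and second vertical derivatives `Fx`, `Fxx`,
all continuous in `d_∞` and of polynomial growth. -/
structure C12pHat (d : ℕ) (T tBase : ℝ) where
  F : ℝ → (ℝ → E d) → ℝ
  Ft : ℝ → (ℝ → E d) → ℝ
  Fx : ℝ → (ℝ → E d) → E d
  Fxx : ℝ → (ℝ → E d) → Matrix (Fin d) (Fin d) ℝ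
  adapted : Adapted T tBase F
  contF : C0Hat T tBase F
  vert : ∀ t γ, MemHat T tBase t γ → ∀ i : Fin d,
    HasDerivAt (fun h : ℝ => F t (vbump t γ (h • basis d i))) (Fx t γ i) 0
  vert2 : ∀ t γ, MemHat T tBase t γ → ∀ i j : Fin d,
    HasDerivAt (fun h : ℝ => Fx t (vbump t γ (h • basis d j)) i) (Fxx t γ j i) 0
  horiz : ∀ t γ, MemHat T tBase t γ → t < T →
    Tendsto (fun h : ℝ => (F (t + h) (clamp t γ) - F t γ) / h)
      (nhdsWithin 0 (Ioi 0)) (nhds (Ft t γ))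
  horizT : ∀ γ, MemHat T tBase T γ →
    Tendsto (fun s => Ft s (clamp s γ)) (nhdsWithin T (Iio T)) (nhds (Ft T γ))
  contFt : C0Hat T tBase Ft
  contFx : ∀ i : Fin d, C0Hat T tBase fun t γ => Fx t γ i
  contFxx : ∀ i j : Fin d, C0Hat T tBase fun t γ => Fxx t γ i j
  growthF : PolyGrowth T tBase F
  growthFt : PolyGrowth T tBase Ft
  growthFx : ∀ i : Fin d, PolyGrowth T tBase fun t γ => Fx t γ i
  growthFxx : ∀ i j : Fin d, PolyGrowth T tBase fun t γ => Fxx t γ i j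

/-- Hilbert–Schmidt (Frobenius) norm of a matrix. -/
def frob {k l : ℕ} (A : Matrix (Fin k) (Fin l) ℝ) : ℝ :=
  Real.sqrt (∑ i, ∑ j, (A i j) ^ 2)

/-- Identification of `Fin k → ℝ` with `EuclideanSpace ℝ (Fin k)`. -/
def toEuc {k : ℕ} (v : Fin k → ℝ) : E k := (WithLp.equiv 2 (Fin k → ℝ)).symm v

/-- The Hamiltonian
`H(γ_t,r,p,l) = sup_u [⟨p, b⟩ + ½ tr(l σ σ^⊤) + q(γ_t, r, σ^⊤ p, u)]`. -/
def hamiltonian (U : Type*) (b : ℝ → (ℝ → E d) → U → E d)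
    (σ' : ℝ → (ℝ → E d) → U → Matrix (Fin d) (Fin n) ℝ)
    (q : ℝ → (ℝ → E d) → ℝ → E n → U → ℝ)
    (t : ℝ) (γ : ℝ → E d) (r : ℝ) (p : E d) (l : Matrix (Fin d) (Fin d) ℝ) : ℝ :=
  ⨆ u : U, ((∑ i, p i * b t γ u i)
    + (1/2) * Matrix.trace (l * (σ' t γ u * (σ' t γ u).transpose))
    + q t γ r (toEuc ((σ' t γ u).transpose.mulVec (fun i => p i))) u)

/-- Hypothesis 2.1 on the coefficients, with Lipschitz/growth constant `L`. -/
structure Hyp (T : ℝ) {d n : ℕ} (U : Type*) [MetricSpace U] (L : ℝ)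
    (b : ℝ → (ℝ → E d) → U → E d)
    (σ' : ℝ → (ℝ → E d) → U → Matrix (Fin d) (Fin n) ℝ)
    (q : ℝ → (ℝ → E d) → ℝ → E n → U → ℝ)
    (φ : (ℝ → E d) → ℝ) : Prop where
  hL : 0 < L
  cont_b : ∀ t γ u, Mem T 0 t γ → ∀ ε > 0, ∃ δ > 0, ∀ s η v, Mem T 0 s η →
    dInfty t γ s η + dist u v < δ → ‖b s η v - b t γ u‖ < ε
  cont_σ : ∀ t γ u, Mem T 0 t γ → ∀ ε > 0, ∃ δ > 0, ∀ s η v, Mem T 0 s η →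
    dInfty t γ s η + dist u v < δ → frob (σ' s η v - σ' t γ u) < ε
  cont_q : ∀ t γ (y : ℝ) (z : E n) u, Mem T 0 t γ → ∀ ε > 0, ∃ δ > 0,
    ∀ s η (y' : ℝ) (z' : E n) v, Mem T 0 s η →
      dInfty t γ s η + |y' - y| + ‖z' - z‖ + dist u v < δ →
      |q s η y' z' v - q t γ y z u| < ε
  cont_φ : ∀ γ, IsContOn T γ → ∀ ε > 0, ∃ δ > 0, ∀ η, IsContOn T η →
    pairDist T γ T η < δ → |φ η - φ γ| < ε
  bound_b : ∀ t γ u, Mem T 0 t γ → ‖b t γ u‖ ^ 2 ≤ L ^ 2 * (1 + supNorm t γ ^ 2)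
  bound_σ : ∀ t γ u, Mem T 0 t γ → frob (σ' t γ u) ^ 2 ≤ L ^ 2 * (1 + supNorm t γ ^ 2)
  lip_b : ∀ t γ γ' u, Mem T 0 t γ → Mem T 0 t γ' →
    ‖b t γ u - b t γ' u‖ ≤ L * pairDist t γ t γ'
  lip_σ : ∀ t γ γ' u, Mem T 0 t γ → Mem T 0 t γ' →
    frob (σ' t γ u - σ' t γ' u) ≤ L * pairDist t γ t γ'
  bound_q : ∀ t γ y z u, Mem T 0 t γ → |q t γ y z u| ≤ L * (1 + supNorm t γ + |y| + ‖z‖)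
  lip_q : ∀ t γ γ' y y' z z' u, Mem T 0 t γ → Mem T 0 t γ' →
    |q t γ y z u - q t γ' y' z' u| ≤ L * (pairDist t γ t γ' + |y - y'| + ‖z - z'‖)
  lip_φ : ∀ γ η, IsContOn T γ → IsContOn T η → |φ γ - φ η| ≤ L * pairDist T γ T η

/-- `Φ ∈ A⁺(γ_t, w)`: `0 = (w - Φ)(γ_t) = sup_{[t,T]×Λ} (w - Φ)`. -/
def InAplus (T t : ℝ) (w : ℝ → (ℝ → E d) → ℝ) (γ : ℝ → E d) (Φ : C12pHat d T t) : Prop :=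
  w t γ - Φ.F t γ = 0 ∧ ∀ s η, Mem T t s η → w s η - Φ.F s η ≤ 0

/-- `Φ ∈ A⁻(γ_t, w)`: `0 = (w + Φ)(γ_t) = inf_{[t,T]×Λ} (w + Φ)`. -/
def InAminus (T t : ℝ) (w : ℝ → (ℝ → E d) → ℝ) (γ : ℝ → E d) (Φ : C12pHat d T t) : Prop :=
  w t γ + Φ.F t γ = 0 ∧ ∀ s η, Mem T t s η → 0 ≤ w s η + Φ.F s η

/-- Viscosity subsolution of the PHJB equation. -/
def IsViscSubsol (T : ℝ) (U : Type*)
    (b : ℝ → (ℝ → E d) → U → E d)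
    (σ' : ℝ → (ℝ → E d) → U → Matrix (Fin d) (Fin n) ℝ)
    (q : ℝ → (ℝ → E d) → ℝ → E n → U → ℝ)
    (φ : (ℝ → E d) → ℝ)
    (w : ℝ → (ℝ → E d) → ℝ) : Prop :=
  (∀ γ, IsContOn T γ → w T γ ≤ φ γ) ∧
  ∀ t γ, Mem T 0 t γ → t < T → ∀ Φ : C12pHat d T t,
    InAplus T t w γ Φ →
    0 ≤ Φ.Ft t γ + hamiltonian U b σ' q t γ (Φ.F t γ) (Φ.Fx t γ) (Φ.Fxx t γ)

/-- Viscosity supersolution of the PHJB equation. -/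
def IsViscSupersol (T : ℝ) (U : Type*)
    (b : ℝ → (ℝ → E d) → U → E d)
    (σ' : ℝ → (ℝ → E d) → U → Matrix (Fin d) (Fin n) ℝ)
    (q : ℝ → (ℝ → E d) → ℝ → E n → U → ℝ)
    (φ : (ℝ → E d) → ℝ)
    (w : ℝ → (ℝ → E d) → ℝ) : Prop :=
  (∀ γ, IsContOn T γ → φ γ ≤ w T γ) ∧
  ∀ t γ, Mem T 0 t γ → t < T → ∀ Φ : C12pHat d T t,
    InAminus T t w γ Φ →
    -Φ.Ft t γ + hamiltonian U b σ' q t γ (-(Φ.F t γ)) (-(Φ.Fx t γ)) (-(Φ.Fxx t γ)) ≤ 0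

/-- Gauge-type function on `Λ^{tBase}`. -/
def IsGaugeType (T tBase : ℝ) (ρ : ℝ → (ℝ → E d) → ℝ → (ℝ → E d) → ℝ) : Prop :=
  (∀ t γ s η, Mem T tBase t γ → Mem T tBase s η → 0 ≤ ρ t γ s η) ∧
  (∀ t γ s η, Mem T tBase t γ → Mem T tBase s η → ∀ ε > 0, ∃ δ > 0,
    ∀ t' γ' s' η', Mem T tBase t' γ' → Mem T tBase s' η' →
      dInfty t γ t' γ' + dInfty s η s' η' < δ →
      |ρ t' γ' s' η' - ρ t γ s η| < ε) ∧
  (∀ s γ, Mem T tBase s γ → ρ s γ s γ = 0) ∧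
  (∀ ε > 0, ∃ δ > 0, ∀ s γ l η, Mem T tBase s γ → Mem T tBase l η →
    ρ s γ l η ≤ δ → dInfty s γ l η < ε)

/-- Upper semicontinuity (w.r.t. `d_∞`) of a path functional. -/
def PathUSC (T tBase : ℝ) (w : ℝ → (ℝ → E d) → ℝ) : Prop :=
  ∀ t γ, Mem T tBase t γ → ∀ c, w t γ < c → ∃ δ > 0, ∀ s η, Mem T tBase s η →
    dInfty t γ s η < δ → w s η < c

/-- Bounded from above. -/
def BddAbovePath (T tBase : ℝ) (w : ℝ → (ℝ → E d) → ℝ) : Prop :=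
  ∃ B, ∀ t γ, Mem T tBase t γ → w t γ ≤ B

/-- `limsup_{‖γ_t‖₀ → ∞} w(γ_t)/‖γ_t‖₀ < 0`. -/
def NegAtInfty (T : ℝ) (w : ℝ → (ℝ → E d) → ℝ) : Prop :=
  ∃ c > 0, ∃ R : ℝ, ∀ t γ, Mem T 0 t γ → R ≤ supNorm t γ → w t γ ≤ -c * supNorm t γ

/-- The function `w̃^{t̂}` of Definition 5.4. -/
def tilde (T tBase : ℝ) (w : ℝ → (ℝ → E d) → ℝ) : ℝ → E d → ℝ := fun t x =>
  if tBase ≤ t then sSup {r | ∃ ξ, Mem T tBase t ξ ∧ ξ t = x ∧ r = w t ξ}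
  else sSup {r | ∃ ξ, Mem T tBase tBase ξ ∧ ξ tBase = x ∧ r = w tBase ξ} - Real.sqrt (tBase - t)

/-- Upper semicontinuous envelope (on `[0,T] × ℝ^d`). -/
def uscEnv (T : ℝ) (g : ℝ → E d → ℝ) : ℝ → E d → ℝ := fun t x =>
  Filter.limsup (fun p : ℝ × E d => g p.1 p.2)
    (nhdsWithin (t, x) ((Icc (0:ℝ) T) ×ˢ (univ : Set (E d))))

/-- A local modulus of continuity. -/
def IsLocalModulus (ρ₁ : ℝ → ℝ → ℝ) : Prop :=
  Continuous (Function.uncurry ρ₁) ∧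
  (∀ r, 0 ≤ r → ρ₁ 0 r = 0) ∧
  (∀ a r, 0 ≤ a → 0 ≤ r → 0 ≤ ρ₁ a r) ∧
  (∀ a b r, 0 ≤ a → 0 ≤ b → 0 ≤ r → ρ₁ (a + b) r ≤ ρ₁ a r + ρ₁ b r) ∧
  (∀ a r r', 0 ≤ a → 0 ≤ r → r ≤ r' → ρ₁ a r ≤ ρ₁ a r')

/-- `(g, gt, gx, gxx)` is a `C^{1,2}` function on `[0,T] × ℝ^d` together with its
time derivative, spatial gradient and spatial Hessian. -/
def IsC12On (T : ℝ) (g gt : ℝ → E d → ℝ) (gx : ℝ → E d → E d)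
    (gxx : ℝ → E d → Matrix (Fin d) (Fin d) ℝ) : Prop :=
  Continuous (fun p : ℝ × E d => g p.1 p.2) ∧
  Continuous (fun p : ℝ × E d => gt p.1 p.2) ∧
  Continuous (fun p : ℝ × E d => gx p.1 p.2) ∧
  Continuous (fun p : ℝ × E d => gxx p.1 p.2) ∧
  (∀ t x, HasDerivAt (fun s => g s x) (gt t x) t) ∧
  (∀ t x (i : Fin d), HasDerivAt (fun h : ℝ => g t (x + h • basis d i)) (gx t x i) 0) ∧
  (∀ t x (i j : Fin d),
    HasDerivAt (fun h : ℝ => gx t (x + h • basis d j) i) (gxx t x j i) 0)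

/-- The class `Φ(t̂, x̂)` of Definition 5.3. -/
def InPhiClass (T : ℝ) (that : ℝ) (xhat : E d) (f : ℝ → E d → ℝ) : Prop :=
  ∃ r > 0, ∀ L > 0, ∀ g gt gx gxx, IsC12On T g gt gx gxx →
    ∃ C > 0, ∀ t x, 0 < t → t < T →
      (∀ s y, 0 ≤ s → s ≤ T → f s y - g s y ≤ f t x - g t x) →
      (|t - that| + ‖x - xhat‖ < r ∧ |f t x| + ‖gx t x‖ + frob (gxx t x) ≤ L) →
      C ≤ gt t x

/-- Bounded and uniformly continuous path functional on `Λ̂^{tBase}`. -/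
def UCBoundedHat (T tBase : ℝ) (f : ℝ → (ℝ → E d) → ℝ) : Prop :=
  (∃ B, ∀ t γ, MemHat T tBase t γ → |f t γ| ≤ B) ∧
  ∀ ε > 0, ∃ δ > 0, ∀ t γ s η, MemHat T tBase t γ → MemHat T tBase s η →
    dInfty t γ s η < δ → |f t γ - f s η| < ε

/-- Basis of ℝ^d × ℝ^d indexed by `Fin d ⊕ Fin d`. -/
def basisProd (d : ℕ) (v : Fin d ⊕ Fin d) : E d × E d :=
  Sum.elim (fun i => (basis d i, 0)) (fun j => (0, basis d j)) v

/-- The full Hessian `∇²φ` of `φ : ℝ^d × ℝ^d → ℝ` as a `(2d) × (2d)` matrix. -/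
def hess2 (φ : E d × E d → ℝ) (p : E d × E d) :
    Matrix (Fin d ⊕ Fin d) (Fin d ⊕ Fin d) ℝ :=
  Matrix.of fun v w => fderiv ℝ (fun x => fderiv ℝ φ x (basisProd d w)) p (basisProd d v)

/-- `∇_{x₁}φ`. -/
def grad1 (φ : E d × E d → ℝ) (p : E d × E d) : E d :=
  toEuc (fun i => fderiv ℝ φ p (basisProd d (Sum.inl i)))

/-- `∇_{x₂}φ`. -/
def grad2 (φ : E d × E d → ℝ) (p : E d × E d) : E d :=
  toEuc (fun i => fderiv ℝ φ p (basisProd d (Sum.inr i)))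

/-- Operator norm of a matrix, acting on Euclidean space. -/
def matOpNorm {ι : Type*} [Fintype ι] [DecidableEq ι] (A : Matrix ι ι ℝ) : ℝ :=
  ‖LinearMap.toContinuousLinearMap (Matrix.toEuclideanLin A)‖

/-- Matrix order `A ≤ B` in the sense of quadratic forms. -/
def matLE {ι : Type*} [Fintype ι] (A B : Matrix ι ι ℝ) : Prop :=
  (B - A).PosSemidef


/-- The state-dependent Hamiltonian `H̄(t,x,r,p,l)`. -/
def hamBar (U : Type*) {d n : ℕ} (bbar : ℝ → E d → U → E d)
    (σbar : ℝ → E d → U → Matrix (Fin d) (Fin n) ℝ)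
    (qbar : ℝ → E d → ℝ → E n → U → ℝ)
    (t : ℝ) (x : E d) (r : ℝ) (p : E d) (l : Matrix (Fin d) (Fin d) ℝ) : ℝ :=
  ⨆ u : U, ((∑ i, p i * bbar t x u i)
    + (1/2) * Matrix.trace (l * (σbar t x u * (σbar t x u).transpose))
    + qbar t x r (toEuc ((σbar t x u).transpose.mulVec (fun i => p i))) u)

variable {d : ℕ} {t s r : ℝ} {γ η ζ : ℝ → E d}

lemma contOn_pairFun (ht : 0 ≤ t) (hs : 0 ≤ s)
    (hγ : ContinuousOn γ (Icc 0 t)) (hη : ContinuousOn η (Icc 0 s)) :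
    ContinuousOn (fun l => ‖γ (min l t) - η (min l s)‖) (Icc 0 (max t s)) := by
  apply ContinuousOn.norm
  apply ContinuousOn.sub
  · exact hγ.comp ((continuous_id.min continuous_const).continuousOn)
      (fun l hl => ⟨le_min hl.1 ht, min_le_right _ _⟩)
  · exact hη.comp ((continuous_id.min continuous_const).continuousOn)
      (fun l hl => ⟨le_min hl.1 hs, min_le_right _ _⟩)

lemma pairDist_bdd (ht : 0 ≤ t) (hs : 0 ≤ s)
    (hγ : ContinuousOn γ (Icc 0 t)) (hη : ContinuousOn η (Icc 0 s)) :
    BddAbove ((fun l => ‖γ (min l t) - η (min l s)‖) '' Icc 0 (max t s)) :=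
  (isCompact_Icc.image_of_continuousOn (contOn_pairFun ht hs hγ hη)).bddAbove

lemma le_pairDist (ht : 0 ≤ t) (hs : 0 ≤ s)
    (hγ : ContinuousOn γ (Icc 0 t)) (hη : ContinuousOn η (Icc 0 s))
    {l : ℝ} (hl : l ∈ Icc 0 (max t s)) :
    ‖γ (min l t) - η (min l s)‖ ≤ pairDist t γ s η :=
  le_csSup (pairDist_bdd ht hs hγ hη) ⟨l, hl, rfl⟩

lemma pairDist_le (ht : 0 ≤ t) (hs : 0 ≤ s) {C : ℝ}
    (h : ∀ l ∈ Icc (0:ℝ) (max t s), ‖γ (min l t) - η (min l s)‖ ≤ C) :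
    pairDist t γ s η ≤ C := by
  apply csSup_le
  · exact (Set.nonempty_Icc.2 (le_max_of_le_left ht)).image _
  · rintro x ⟨l, hl, rfl⟩; exact h l hl

lemma pairDist_nonneg (ht : 0 ≤ t) (hs : 0 ≤ s)
    (hγ : ContinuousOn γ (Icc 0 t)) (hη : ContinuousOn η (Icc 0 s)) :
    0 ≤ pairDist t γ s η :=
  (norm_nonneg _).trans (le_pairDist ht hs hγ hη ⟨le_refl 0, le_max_of_le_left ht⟩)

lemma pairDist_self (ht : 0 ≤ t) : pairDist t γ t γ = 0 := by
  have h1 : pairDist t γ t γ ≤ 0 := pairDist_le ht ht (by simp)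
  have h2 : (0:ℝ) ≤ pairDist t γ t γ := by
    refine le_csSup ?_ ⟨0, ⟨le_refl 0, le_max_of_le_left ht⟩, by simp⟩
    refine ⟨0, ?_⟩
    rintro x ⟨l, hl, rfl⟩; simp
  linarith

lemma clamp_le_pairDist (ht : 0 ≤ t) (hs : 0 ≤ s)
    (hγ : ContinuousOn γ (Icc 0 t)) (hη : ContinuousOn η (Icc 0 s)) (l : ℝ) :
    ‖γ (min (max l 0) t) - η (min (max l 0) s)‖ ≤ pairDist t γ s η := by
  have h := le_pairDist ht hs hγ hη (l := min (max l 0) (max t s))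
    ⟨le_min (le_max_right _ _) (le_max_of_le_left ht), min_le_right _ _⟩
  have e1 : min (min (max l 0) (max t s)) t = min (max l 0) t := by
    rw [min_assoc, min_eq_right (le_max_left t s)]
  have e2 : min (min (max l 0) (max t s)) s = min (max l 0) s := by
    rw [min_assoc, min_eq_right (le_max_right t s)]
  rwa [e1, e2] at h

lemma pairDist_triangle (ht : 0 ≤ t) (hs : 0 ≤ s) (hr : 0 ≤ r)
    (hγ : ContinuousOn γ (Icc 0 t)) (hη : ContinuousOn η (Icc 0 s))
    (hζ : ContinuousOn ζ (Icc 0 r)) :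
    pairDist t γ s η ≤ pairDist t γ r ζ + pairDist r ζ s η := by
  apply pairDist_le ht hs
  intro l hl
  have h1 := clamp_le_pairDist ht hr hγ hζ (l := l)
  have h2 := clamp_le_pairDist hr hs hζ hη (l := l)
  have hml : max l 0 = l := max_eq_left hl.1
  rw [hml] at h1 h2
  calc ‖γ (min l t) - η (min l s)‖
      ≤ ‖γ (min l t) - ζ (min l r)‖ + ‖ζ (min l r) - η (min l s)‖ := by
        have := norm_sub_le (γ (min l t) - ζ (min l r)) (η (min l s) - ζ (min l r))
        simpa [sub_sub_sub_cancel_right] using norm_sub_le_norm_sub_add_norm_sub (γ (min l t)) (ζ (min l r)) (η (min l s))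
    _ ≤ _ := add_le_add h1 h2

lemma dInfty_triangle (ht : 0 ≤ t) (hs : 0 ≤ s) (hr : 0 ≤ r)
    (hγ : ContinuousOn γ (Icc 0 t)) (hη : ContinuousOn η (Icc 0 s))
    (hζ : ContinuousOn ζ (Icc 0 r)) :
    dInfty t γ s η ≤ dInfty t γ r ζ + dInfty r ζ s η := by
  have := pairDist_triangle ht hs hr hγ hη hζ
  have habs : |t - s| ≤ |t - r| + |r - s| := abs_sub_le t r s
  unfold dInfty; linarith

lemma pairDist_le_dInfty : pairDist t γ s η ≤ dInfty t γ s η := by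
  unfold dInfty; have := abs_nonneg (t - s); linarith

/-- modified Borwein–Preiss variational principle on `Λ^t`. -/
theorem borwein_preiss_variational_principle
    {d : ℕ} (T : ℝ) (hT : 0 < T) (t : ℝ) (ht0 : 0 ≤ t) (htT : t ≤ T)
    (f : ℝ → (ℝ → E d) → ℝ)
    (husc : PathUSC T t f)
    (hbdd : BddAbovePath T t f)
    (ρ : ℝ → (ℝ → E d) → ℝ → (ℝ → E d) → ℝ)
    (hρ : IsGaugeType T t ρ)
    (δ : ℕ → ℝ) (hδ : ∀ i, 0 < δ i)
    (ε : ℝ) (hε : 0 < ε)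
    (t0 : ℝ) (γ0 : ℝ → E d) (h0 : Mem T t t0 γ0)
    (hnear : ∀ s γ, Mem T t s γ → f s γ - ε ≤ f t0 γ0) :
    ∃ (that : ℝ) (γhat : ℝ → E d) (ts : ℕ → ℝ) (gs : ℕ → ℝ → E d) (Shat : ℝ),
      Mem T t that γhat ∧
      ts 0 = t0 ∧ gs 0 = γ0 ∧
      (∀ i, Mem T t (ts i) (gs i)) ∧
      -- (i)
      ρ t0 γ0 that γhat ≤ ε / δ 0 ∧
      (∀ i, ρ (ts i) (gs i) that γhat ≤ ε / (2 ^ i * δ 0)) ∧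
      Monotone ts ∧ (∀ i, ts i ≤ that) ∧ Tendsto ts atTop (nhds that) ∧
      -- (ii): the series converges and `f(γ̂) - Σ δᵢ ρ(γⁱ, γ̂) ≥ f(γ⁰)`
      HasSum (fun i => δ i * ρ (ts i) (gs i) that γhat) Shat ∧
      f t0 γ0 ≤ f that γhat - Shat ∧
      -- (iii)
      (∀ s η, Mem T that s η →
        ¬(s = that ∧ ∀ l ∈ Icc (0:ℝ) s, η l = γhat l) →
        ∀ S, HasSum (fun i => δ i * ρ (ts i) (gs i) s η) S →
          f s η - S < f that γhat - Shat) := by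
  classical
  obtain ⟨hρ0, hρcont, hρself, hρgauge⟩ := hρ
  obtain ⟨B, hB⟩ := hbdd
  -- abbreviations
  set F : ℝ × (ℝ → E d) → ℝ := fun x => f x.1 x.2 with hFdef
  set R : ℝ × (ℝ → E d) → ℝ × (ℝ → E d) → ℝ := fun x y => ρ x.1 x.2 y.1 y.2 with hRdef
  set eps : ℕ → ℝ := fun k => min (δ k * (ε / (2 ^ k * δ 0))) (ε / 2 ^ k) with hepsdef
  have heps : ∀ k, 0 < eps k := by
    intro k
    have h2 : (0:ℝ) < 2 ^ k := by positivity
    exact lt_min (mul_pos (hδ k) (div_pos hε (mul_pos h2 (hδ 0)))) (div_pos hε h2)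
  set G : (ℕ → ℝ × (ℝ → E d)) → ℕ → ℝ × (ℝ → E d) → ℝ :=
    fun h k x => F x - ∑ i ∈ Finset.range (k+1), δ i * R (h i) x with hGdef
  set A : (ℕ → ℝ × (ℝ → E d)) → ℕ → Set (ℝ × (ℝ → E d)) :=
    fun h k => {x | Mem T (h k).1 x.1 x.2 ∧ G h k (h k) ≤ G h k x} with hAdef
  set Spec : (ℕ → ℝ × (ℝ → E d)) → ℕ → ℝ × (ℝ → E d) → Prop :=
    fun h k y => y ∈ A h k ∧ ∀ x ∈ A h k, G h k x ≤ G h k y + eps (k+1) with hSpecdef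
  set step : (ℕ → ℝ × (ℝ → E d)) → ℕ → ℝ × (ℝ → E d) :=
    fun h k => if hc : ∃ y, Spec h k y then Classical.choose hc else h k with hstepdef
  set Hh : ℕ → ℕ → ℝ × (ℝ → E d) :=
    fun k => Nat.rec (fun _ => (t0, γ0)) (fun k hk => Function.update hk (k+1) (step hk k)) k
    with hHhdef
  set p : ℕ → ℝ × (ℝ → E d) := fun k => Hh k k with hpdef
  have hp0 : p 0 = (t0, γ0) := rfl
  have hHsucc : ∀ k, Hh (k+1) = Function.update (Hh k) (k+1) (step (Hh k) k) := fun k => rfl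
  have hHagree : ∀ k i, i ≤ k → Hh k i = p i := by
    intro k
    induction k with
    | zero => intro i hi; interval_cases i; rfl
    | succ k ih =>
      intro i hi
      rcases Nat.lt_or_ge i (k+1) with h | h
      · have : Hh (k+1) i = Hh k i := by
          rw [hHsucc]; exact Function.update_of_ne (by omega) _ _
        rw [this, ih i (by omega)]
      · have : i = k + 1 := by omega
        subst this; rfl
  have hp_succ : ∀ k, p (k+1) = step (Hh k) k := by
    intro k
    show Hh (k+1) (k+1) = _
    rw [hHsucc]; exact Function.update_self _ _ _
  -- primed versions depending only on p
  set G' : ℕ → ℝ × (ℝ → E d) → ℝ :=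
    fun k x => F x - ∑ i ∈ Finset.range (k+1), δ i * R (p i) x with hG'def
  set A' : ℕ → Set (ℝ × (ℝ → E d)) :=
    fun k => {x | Mem T (p k).1 x.1 x.2 ∧ G' k (p k) ≤ G' k x} with hA'def
  have hGH : ∀ k x, G (Hh k) k x = G' k x := by
    intro k x
    simp only [hGdef, hG'def]
    congr 1
    refine Finset.sum_congr rfl fun i hi => ?_
    rw [hHagree k i (Nat.lt_succ_iff.mp (Finset.mem_range.mp hi))]
  have hAH : ∀ k, A (Hh k) k = A' k := by
    intro k
    simp only [hAdef, hA'def]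
    ext x
    simp only [hGH, hHagree k k le_rfl]
  have hSpecIff : ∀ k y, Spec (Hh k) k y ↔
      (y ∈ A' k ∧ ∀ x ∈ A' k, G' k x ≤ G' k y + eps (k+1)) := by
    intro k y
    simp only [hSpecdef, hAH, hGH]
  -- existence of ε-maximizers
  have hex : ∀ k, (∀ i ≤ k, Mem T t (p i).1 (p i).2) →
      ∃ y, y ∈ A' k ∧ ∀ x ∈ A' k, G' k x ≤ G' k y + eps (k+1) := by
    intro k hmem
    have hpk : p k ∈ A' k := ⟨⟨le_rfl, (hmem k le_rfl).2.1, (hmem k le_rfl).2.2⟩, le_rfl⟩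
    have hne : (G' k '' A' k).Nonempty := ⟨_, ⟨p k, hpk, rfl⟩⟩
    have hub : ∀ v ∈ G' k '' A' k, v ≤ B := by
      rintro v ⟨x, hx, rfl⟩
      have hxmem : Mem T t x.1 x.2 :=
        ⟨(hmem k le_rfl).1.trans hx.1.1, hx.1.2.1, hx.1.2.2⟩
      have h1 : F x ≤ B := hB _ _ hxmem
      have h2 : (0:ℝ) ≤ ∑ i ∈ Finset.range (k+1), δ i * R (p i) x := by
        refine Finset.sum_nonneg fun i hi => ?_
        have hi' : i ≤ k := Nat.lt_succ_iff.mp (Finset.mem_range.mp hi)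
        exact mul_nonneg (hδ i).le (hρ0 _ _ _ _ (hmem i hi') hxmem)
      simp only [hG'def]; linarith
    have hbdda : BddAbove (G' k '' A' k) := ⟨B, fun v hv => hub v hv⟩
    have hlt : sSup (G' k '' A' k) - eps (k+1) < sSup (G' k '' A' k) := by
      linarith [heps (k+1)]
    obtain ⟨v, ⟨y, hy, rfl⟩, hv⟩ := exists_lt_of_lt_csSup hne hlt
    refine ⟨y, hy, fun x hx => ?_⟩
    have := le_csSup hbdda ⟨x, hx, rfl⟩
    linarith
  -- everything is admissible and the spec holds at each step
  have hmain : ∀ k, (∀ i ≤ k, Mem T t (p i).1 (p i).2) ∧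
      (p (k+1) ∈ A' k ∧ ∀ x ∈ A' k, G' k x ≤ G' k (p (k+1)) + eps (k+1)) := by
    intro k
    induction k with
    | zero =>
      have hm : ∀ i ≤ 0, Mem T t (p i).1 (p i).2 := by
        intro i hi; interval_cases i; exact h0
      refine ⟨hm, ?_⟩
      have hc : ∃ y, Spec (Hh 0) 0 y := by
        obtain ⟨y, hy⟩ := hex 0 hm
        exact ⟨y, (hSpecIff 0 y).mpr hy⟩
      have : p (0+1) = Classical.choose hc := by
        rw [hp_succ 0]; simp only [hstepdef]; rw [dif_pos hc]
      rw [this]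
      exact (hSpecIff 0 _).mp (Classical.choose_spec hc)
    | succ k ih =>
      obtain ⟨hm, hs⟩ := ih
      have hm' : ∀ i ≤ k + 1, Mem T t (p i).1 (p i).2 := by
        intro i hi
        rcases Nat.lt_or_ge i (k+1) with h | h
        · exact hm i (by omega)
        · have : i = k + 1 := by omega
          subst this
          exact ⟨(hm k le_rfl).1.trans hs.1.1.1, hs.1.1.2.1, hs.1.1.2.2⟩
      refine ⟨hm', ?_⟩
      have hc : ∃ y, Spec (Hh (k+1)) (k+1) y := by
        obtain ⟨y, hy⟩ := hex (k+1) hm'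
        exact ⟨y, (hSpecIff (k+1) y).mpr hy⟩
      have : p (k+1+1) = Classical.choose hc := by
        rw [hp_succ (k+1)]; simp only [hstepdef]; rw [dif_pos hc]
      rw [this]
      exact (hSpecIff (k+1) _).mp (Classical.choose_spec hc)
  have hMem : ∀ i, Mem T t (p i).1 (p i).2 := fun i => (hmain i).1 i le_rfl
  have hspec : ∀ k, p (k+1) ∈ A' k ∧ ∀ x ∈ A' k, G' k x ≤ G' k (p (k+1)) + eps (k+1) :=
    fun k => (hmain k).2
  set ts : ℕ → ℝ := fun k => (p k).1 with htsdef
  set gs : ℕ → ℝ → E d := fun k => (p k).2 with hgsdef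
  have hts0 : ∀ k, 0 ≤ ts k := fun k => ht0.trans (hMem k).1
  have htsT : ∀ k, ts k ≤ T := fun k => (hMem k).2.1
  have hcont : ∀ k, ContinuousOn (gs k) (Icc 0 (ts k)) := fun k => (hMem k).2.2
  have hRself : ∀ k, R (p k) (p k) = 0 := fun k => hρself _ _ (hMem k)
  have hRnonneg : ∀ k x, Mem T t x.1 x.2 → 0 ≤ R (p k) x :=
    fun k x hx => hρ0 _ _ _ _ (hMem k) hx
  have hAmemT : ∀ k x, x ∈ A' k → Mem T t x.1 x.2 :=
    fun k x hx => ⟨(hMem k).1.trans hx.1.1, hx.1.2.1, hx.1.2.2⟩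
  have hGsucc : ∀ k x, G' (k+1) x = G' k x - δ (k+1) * R (p (k+1)) x := by
    intro k x
    simp only [hG'def]
    rw [Finset.sum_range_succ]
    ring
  have hGpt : ∀ k, G' (k+1) (p (k+1)) = G' k (p (k+1)) := by
    intro k
    rw [hGsucc k (p (k+1)), hRself (k+1)]
    ring
  have hpA : ∀ k, p k ∈ A' k := fun k => ⟨⟨le_rfl, (hMem k).2.1, (hMem k).2.2⟩, le_rfl⟩
  have hAsub : ∀ k, A' (k+1) ⊆ A' k := by
    intro k x hx
    have hxT : Mem T t x.1 x.2 := hAmemT (k+1) x hx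
    have h1 : Mem T (p k).1 x.1 x.2 := ⟨(hspec k).1.1.1.trans hx.1.1, hx.1.2.1, hx.1.2.2⟩
    refine ⟨h1, ?_⟩
    have h2 : G' (k+1) (p (k+1)) ≤ G' (k+1) x := hx.2
    have h3 : G' k (p k) ≤ G' k (p (k+1)) := (hspec k).1.2
    have h4 := hGsucc k x
    have h5 := hGpt k
    have h6 : 0 ≤ δ (k+1) * R (p (k+1)) x :=
      mul_nonneg (hδ (k+1)).le (hRnonneg (k+1) x hxT)
    linarith
  have hAchain : ∀ k j, k ≤ j → A' j ⊆ A' k := by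
    intro k j hkj
    induction j, hkj using Nat.le_induction with
    | base => exact fun x hx => hx
    | succ j hkj ih => exact fun x hx => ih (hAsub j hx)
  have hpin : ∀ k j, k ≤ j → p j ∈ A' k := by
    intro k j hkj
    induction j, hkj using Nat.le_induction with
    | base => exact hpA k
    | succ j hkj ih => exact hAchain k j hkj (hspec j).1
  have hmono_ts : Monotone ts := monotone_nat_of_le_succ (fun k => (hspec k).1.1.1)
  have hGmono : ∀ k j, k ≤ j → G' k (p k) ≤ G' j (p j) := by
    intro k j hkj
    induction j, hkj using Nat.le_induction with
    | base => exact le_rfl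
    | succ j hkj ih =>
      refine ih.trans ?_
      rw [hGpt j]
      exact (hspec j).1.2
  -- diameter estimates
  have hdiam : ∀ k x, x ∈ A' k → δ k * R (p k) x ≤ eps k := by
    intro k
    cases k with
    | zero =>
      intro x hx
      have h1 : G' 0 (p 0) ≤ G' 0 x := hx.2
      have h2 : G' 0 x = F x - δ 0 * R (p 0) x := by
        simp only [hG'def]; norm_num
      have h3 : G' 0 (p 0) = F (p 0) := by
        simp only [hG'def]; norm_num [hRself 0]
      have h4 : F x - ε ≤ F (p 0) := hnear x.1 x.2 (hAmemT 0 x hx)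
      have h5 : δ 0 * R (p 0) x ≤ ε := by
        rw [h2, h3] at h1; linarith
      refine le_min ?_ ?_
      · have : δ 0 * (ε / (2 ^ 0 * δ 0)) = ε := by
          rw [pow_zero, one_mul, mul_comm, div_mul_cancel₀ ε (ne_of_gt (hδ 0))]
        rw [this]; exact h5
      · simpa using h5
    | succ k =>
      intro x hx
      have hxk : x ∈ A' k := hAsub k hx
      have h1 : G' k x ≤ G' k (p (k+1)) + eps (k+1) := (hspec k).2 x hxk
      have h2 : G' (k+1) (p (k+1)) ≤ G' (k+1) x := hx.2
      have h3 := hGsucc k x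
      have h4 := hGpt k
      linarith
  have heps_le1 : ∀ k, eps k ≤ δ k * (ε / (2 ^ k * δ 0)) := fun k => min_le_left _ _
  have heps_le2 : ∀ k, eps k ≤ ε / 2 ^ k := fun k => min_le_right _ _
  have hrle : ∀ k x, x ∈ A' k → R (p k) x ≤ ε / (2 ^ k * δ 0) := by
    intro k x hx
    have := (hdiam k x hx).trans (heps_le1 k)
    exact le_of_mul_le_mul_left this (hδ k)
  have hdle : ∀ k x, x ∈ A' k → δ k * R (p k) x ≤ ε / 2 ^ k :=
    fun k x hx => (hdiam k x hx).trans (heps_le2 k)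
  -- the candidate limit time
  have hbddts : BddAbove (Set.range ts) := ⟨T, by rintro v ⟨k, rfl⟩; exact htsT k⟩
  set that : ℝ := ⨆ k, ts k with hthatdef
  have hts_le_that : ∀ k, ts k ≤ that := fun k => le_ciSup hbddts k
  have hthat_tend : Tendsto ts atTop (𝓝 that) := tendsto_atTop_ciSup hmono_ts hbddts
  have hthatT : that ≤ T := ciSup_le htsT
  have htthat : t ≤ that := (hMem 0).1.trans (hts_le_that 0)
  have h0that : 0 ≤ that := ht0.trans htthat
  -- smallness of the bounds
  have hsmall : ∀ c > (0:ℝ), ∃ K, ∀ k ≥ K, ε / (2 ^ k * δ 0) < c := by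
    intro c hc
    have h1 : Tendsto (fun k : ℕ => ε / (2 ^ k * δ 0)) atTop (𝓝 0) := by
      have h2 : (fun k : ℕ => ε / (2 ^ k * δ 0)) = fun k : ℕ => (ε / δ 0) * (1/2 : ℝ) ^ k := by
        funext k
        rw [div_pow, one_pow]
        field_simp
      rw [h2]
      have := tendsto_pow_atTop_nhds_zero_of_lt_one (by norm_num : (0:ℝ) ≤ 1/2)
        (by norm_num : (1/2:ℝ) < 1)
      simpa using this.const_mul (ε / δ 0)
    have := h1.eventually (eventually_lt_nhds hc)
    exact eventually_atTop.mp this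
  -- the gauge gives a Cauchy-type property
  have hcau : ∀ e > (0:ℝ), ∃ K, ∀ k ≥ K, ∀ j ≥ k, dInfty (ts k) (gs k) (ts j) (gs j) < e := by
    intro e he
    obtain ⟨δ', hδ'pos, hδ'⟩ := hρgauge e he
    obtain ⟨K, hK⟩ := hsmall δ' hδ'pos
    refine ⟨K, fun k hk j hj => ?_⟩
    have h1 : R (p k) (p j) ≤ δ' := (hrle k (p j) (hpin k j hj)).trans (hK k hk).le
    exact hδ' _ _ _ _ (hMem k) (hMem j) h1
  -- the clamped paths
  set Fc : ℕ → ℝ → E d := fun j l => (p j).2 (min (max l 0) (ts j)) with hFcdef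
  have hFcCont : ∀ j, Continuous (Fc j) := by
    intro j
    refine (hcont j).comp_continuous
      ((continuous_id.max continuous_const).min continuous_const) (fun l => ?_)
    exact ⟨le_min (le_max_right _ _) (hts0 j), min_le_right _ _⟩
  have hFcPair : ∀ j k l, ‖Fc k l - Fc j l‖ ≤ pairDist (ts k) (gs k) (ts j) (gs j) :=
    fun j k l => clamp_le_pairDist (hts0 k) (hts0 j) (hcont k) (hcont j) l
  have hFcCauchy : ∀ l, CauchySeq (fun j => Fc j l) := by
    intro l
    rw [Metric.cauchySeq_iff']
    intro e he
    obtain ⟨K, hK⟩ := hcau e he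
    refine ⟨K, fun n hn => ?_⟩
    rw [dist_eq_norm]
    calc ‖Fc n l - Fc K l‖ ≤ pairDist (ts K) (gs K) (ts n) (gs n) := by
          rw [norm_sub_rev]; exact hFcPair n K l
      _ ≤ dInfty (ts K) (gs K) (ts n) (gs n) := pairDist_le_dInfty
      _ < e := hK K le_rfl n hn
  have hlim : ∀ l, ∃ x, Tendsto (fun j => Fc j l) atTop (𝓝 x) :=
    fun l => cauchySeq_tendsto_of_complete (hFcCauchy l)
  choose γh hγh using hlim
  have hunif : ∀ e > (0:ℝ), ∃ K, ∀ j ≥ K, ∀ l, ‖Fc j l - γh l‖ ≤ e := by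
    intro e he
    obtain ⟨K, hK⟩ := hcau e he
    refine ⟨K, fun j hj l => ?_⟩
    have hb : ∀ m ≥ j, ‖Fc j l - Fc m l‖ ≤ e := by
      intro m hm
      exact ((hFcPair m j l).trans pairDist_le_dInfty).trans (hK j hj m hm).le
    have htnd : Tendsto (fun m => ‖Fc j l - Fc m l‖) atTop (𝓝 ‖Fc j l - γh l‖) :=
      (tendsto_const_nhds.sub (hγh l)).norm
    exact le_of_tendsto htnd (eventually_atTop.mpr ⟨j, hb⟩)
  have hγhcont : Continuous γh := by
    have htu : TendstoUniformly (fun j l => Fc j l) γh atTop := by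
      rw [Metric.tendstoUniformly_iff]
      intro e he
      obtain ⟨K, hK⟩ := hunif (e/2) (by linarith)
      refine eventually_atTop.mpr ⟨K, fun j hj l => ?_⟩
      rw [dist_comm, dist_eq_norm]
      calc ‖Fc j l - γh l‖ ≤ e/2 := hK j hj l
        _ < e := by linarith
    exact htu.continuous (Filter.Eventually.of_forall hFcCont).frequently
  have hγhMem : Mem T t that γh := ⟨htthat, hthatT, hγhcont.continuousOn⟩
  have hγh_clamp : ∀ l, γh (min (max l 0) that) = γh l := by
    intro l
    have h2 : (fun j => Fc j (min (max l 0) that)) = fun j => Fc j l := by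
      funext j
      simp only [hFcdef]
      congr 1
      rw [max_eq_left (le_min (le_max_right _ _) h0that)]
      rw [min_assoc, min_eq_right (hts_le_that j)]
    have h1 := hγh (min (max l 0) that)
    rw [h2] at h1
    exact tendsto_nhds_unique h1 (hγh l)
  -- distance to the limit
  have hpd_hat : ∀ e > (0:ℝ), ∃ K, ∀ j ≥ K,
      pairDist (ts j) (gs j) that γh ≤ e ∧ pairDist that γh (ts j) (gs j) ≤ e := by
    intro e he
    obtain ⟨K, hK⟩ := hunif e he
    refine ⟨K, fun j hj => ?_⟩
    have hval : ∀ l ∈ Icc (0:ℝ) that, ‖gs j (min l (ts j)) - γh (min l that)‖ ≤ e := by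
      intro l hl
      have h1 : gs j (min l (ts j)) = Fc j l := by
        simp only [hFcdef]; rw [max_eq_left hl.1]
      have h2 : γh (min l that) = γh l := by rw [min_eq_left hl.2]
      rw [h1, h2]
      exact hK j hj l
    constructor
    · refine pairDist_le (hts0 j) h0that (fun l hl => ?_)
      rw [max_eq_right (hts_le_that j)] at hl
      exact hval l hl
    · refine pairDist_le h0that (hts0 j) (fun l hl => ?_)
      rw [max_eq_left (hts_le_that j)] at hl
      rw [norm_sub_rev]
      exact hval l hl
  have hd_hat : ∀ e > (0:ℝ), ∃ K, ∀ j ≥ K,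
      dInfty that γh (ts j) (gs j) < e ∧ dInfty (ts j) (gs j) that γh < e := by
    intro e he
    obtain ⟨K1, hK1⟩ := hpd_hat (e/3) (by linarith)
    have h2 : ∀ᶠ j in atTop, |that - ts j| < e/3 := by
      have := hthat_tend.eventually (Metric.ball_mem_nhds that (by linarith : (0:ℝ) < e/3))
      filter_upwards [this] with j hj
      simp only [Metric.mem_ball, Real.dist_eq] at hj
      rw [abs_sub_comm] at hj
      exact hj
    obtain ⟨K2, hK2⟩ := eventually_atTop.mp h2
    refine ⟨max K1 K2, fun j hj => ?_⟩
    have hj1 := hK1 j (le_of_max_le_left hj)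
    have hj2 := hK2 j (le_of_max_le_right hj)
    constructor
    · unfold dInfty; linarith [hj1.2, hj2]
    · unfold dInfty
      have h3 : |ts j - that| < e/3 := by rw [abs_sub_comm]; exact hj2
      linarith [hj1.1]
  -- convergence of ρ values
  set ph : ℝ × (ℝ → E d) := (that, γh) with hphdef
  have hρtend : ∀ i, Tendsto (fun j => R (p i) (p j)) atTop (𝓝 (R (p i) ph)) := by
    intro i
    rw [Metric.tendsto_atTop]
    intro e he
    obtain ⟨δ', hδ'pos, hδ'⟩ := hρcont (ts i) (gs i) that γh (hMem i) hγhMem e he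
    obtain ⟨K, hK⟩ := hd_hat δ' hδ'pos
    refine ⟨K, fun j hj => ?_⟩
    rw [Real.dist_eq]
    refine hδ' (ts i) (gs i) (ts j) (gs j) (hMem i) (hMem j) ?_
    have hz : dInfty (ts i) (gs i) (ts i) (gs i) = 0 := by
      unfold dInfty
      rw [pairDist_self (hts0 i)]
      simp
    rw [hz, zero_add]
    exact (hK j hj).1
  have hρhat_nonneg : ∀ k, 0 ≤ R (p k) ph := fun k => hρ0 _ _ _ _ (hMem k) hγhMem
  have hρhat_le : ∀ k, R (p k) ph ≤ ε / (2 ^ k * δ 0) := by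
    intro k
    refine le_of_tendsto (hρtend k) (eventually_atTop.mpr ⟨k, fun j hj => ?_⟩)
    exact hrle k (p j) (hpin k j hj)
  have hδρhat_le : ∀ k, δ k * R (p k) ph ≤ ε / 2 ^ k := by
    intro k
    refine le_of_tendsto ((hρtend k).const_mul (δ k)) (eventually_atTop.mpr ⟨k, fun j hj => ?_⟩)
    exact hdle k (p j) (hpin k j hj)
  -- summability
  have hsummable : Summable (fun k => δ k * R (p k) ph) := by
    refine Summable.of_nonneg_of_le
      (fun k => mul_nonneg (hδ k).le (hρhat_nonneg k)) hδρhat_le ?_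
    have h1 : Summable (fun k : ℕ => ε * (1/2 : ℝ) ^ k) :=
      (summable_geometric_of_lt_one (by norm_num) (by norm_num)).mul_left ε
    refine h1.congr (fun k => ?_)
    rw [div_pow, one_pow]
    ring
  set Shat : ℝ := ∑' k, δ k * R (p k) ph with hShatdef
  have hShat : HasSum (fun k => δ k * R (p k) ph) Shat := hsummable.hasSum
  have hpartial : ∀ n, ∑ i ∈ Finset.range n, δ i * R (p i) ph ≤ Shat := by
    intro n
    exact sum_le_hasSum (Finset.range n)
      (fun i _ => mul_nonneg (hδ i).le (hρhat_nonneg i)) hShat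
  -- the key upper semicontinuity estimate
  have hkey : ∀ k, G' k (p k) ≤ F ph - Shat := by
    intro k
    by_contra hlt
    push_neg at hlt
    set m := G' k (p k) with hmdef
    set θ := m + Shat - F ph with hθdef
    have hθpos : 0 < θ := by simp only [hθdef]; linarith
    have hFc : F ph < F ph + θ/2 := by linarith
    obtain ⟨δu, hδupos, hδu⟩ := husc that γh hγhMem (F ph + θ/2) hFc
    -- a good truncation level
    have hpsum := hShat.tendsto_sum_nat
    have hNev : ∀ᶠ n in atTop, Shat - θ/8 < ∑ i ∈ Finset.range n, δ i * R (p i) ph :=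
      hpsum.eventually (eventually_gt_nhds (by linarith))
    obtain ⟨N, hN⟩ := eventually_atTop.mp hNev
    have hNsum : Shat - θ/8 < ∑ i ∈ Finset.range (N+1), δ i * R (p i) ph :=
      hN (N+1) (by omega)
    -- eventually the truncated sums at p j are close
    have hsumtend : Tendsto (fun j => ∑ i ∈ Finset.range (N+1), δ i * R (p i) (p j)) atTop
        (𝓝 (∑ i ∈ Finset.range (N+1), δ i * R (p i) ph)) := by
      exact tendsto_finset_sum _ (fun i _ => (hρtend i).const_mul (δ i))
    have hev1 : ∀ᶠ j in atTop,
        Shat - θ/4 < ∑ i ∈ Finset.range (N+1), δ i * R (p i) (p j) :=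
      hsumtend.eventually (eventually_gt_nhds (by linarith))
    obtain ⟨K1, hK1⟩ := hd_hat δu hδupos
    have hev2 : ∀ᶠ j in atTop, dInfty that γh (ts j) (gs j) < δu :=
      eventually_atTop.mpr ⟨K1, fun j hj => (hK1 j hj).1⟩
    have hev3 : ∀ᶠ j in atTop, max k N ≤ j := eventually_ge_atTop _
    obtain ⟨j, hj1, hj2, hj3⟩ := (hev1.and (hev2.and hev3)).exists
    have hjk : k ≤ j := le_of_max_le_left hj3
    have hjN : N ≤ j := le_of_max_le_right hj3
    -- f (p j) < F ph + θ/2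
    have hfj : F (p j) < F ph + θ/2 := hδu (ts j) (gs j) (hMem j) hj2
    -- but G' j (p j) ≥ m forces f (p j) to be large
    have hGj : m ≤ G' j (p j) := hGmono k j hjk
    have hsub : ∑ i ∈ Finset.range (N+1), δ i * R (p i) (p j)
        ≤ ∑ i ∈ Finset.range (j+1), δ i * R (p i) (p j) := by
      refine Finset.sum_le_sum_of_subset_of_nonneg ?_ (fun i hi _ => ?_)
      · exact Finset.range_mono (by omega : N + 1 ≤ j + 1)
      · exact mul_nonneg (hδ i).le
          (hRnonneg i (p j) (hMem j))
    have hGj' : G' j (p j) = F (p j) - ∑ i ∈ Finset.range (j+1), δ i * R (p i) (p j) := rfl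
    rw [hGj'] at hGj
    linarith
  -- conclusion (ii) at k = 0
  have h30 : G' 0 (p 0) = F (p 0) := by
    simp only [hG'def]; norm_num [hRself 0]
  have hii : f t0 γ0 ≤ f that γh - Shat := by
    have := hkey 0
    rw [h30] at this
    exact this
  -- conclusion (iii)
  have hiii : ∀ s η, Mem T that s η →
      ¬(s = that ∧ ∀ l ∈ Icc (0:ℝ) s, η l = γh l) →
      ∀ S, HasSum (fun i => δ i * ρ (ts i) (gs i) s η) S →
        f s η - S < f that γh - Shat := by
    intro s η hmemh hne S hS
    have hmemt : Mem T t s η := ⟨htthat.trans hmemh.1, hmemh.2.1, hmemh.2.2⟩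
    have hs0 : 0 ≤ s := ht0.trans hmemt.1
    set x : ℝ × (ℝ → E d) := (s, η) with hxdef
    have hxA : ∃ k, x ∉ A' k := by
      by_contra hall
      push_neg at hall
      have hdz : dInfty that γh s η ≤ 0 := by
        by_contra hpos
        push_neg at hpos
        set e := dInfty that γh s η with hedef
        obtain ⟨δ', hδ'pos, hδ'⟩ := hρgauge (e/2) (by linarith)
        obtain ⟨K1, hK1⟩ := hd_hat (e/2) (by linarith)
        obtain ⟨K2, hK2⟩ := hsmall δ' hδ'pos
        set k := max K1 K2 with hkdef
        have h1 : dInfty (ts k) (gs k) s η < e/2 := by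
          refine hδ' _ _ _ _ (hMem k) hmemt ?_
          exact (hrle k x (hall k)).trans (hK2 k (le_max_right _ _)).le
        have h2 : dInfty that γh (ts k) (gs k) < e/2 := (hK1 k (le_max_left _ _)).1
        have h3 := dInfty_triangle h0that hs0 (hts0 k)
          hγhcont.continuousOn hmemt.2.2 (hcont k)
        rw [← hedef] at h3
        linarith
      have hpd0 : 0 ≤ pairDist that γh s η :=
        pairDist_nonneg h0that hs0 hγhcont.continuousOn hmemt.2.2
      have habs0 : 0 ≤ |that - s| := abs_nonneg _
      have hdef : dInfty that γh s η = |that - s| + pairDist that γh s η := rfl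
      have hseq : s = that := by
        have h4 : |that - s| = 0 := by linarith [hdz, hpd0, habs0, hdef.le]
        have := abs_eq_zero.mp h4
        linarith
      refine hne ⟨hseq, fun l hl => ?_⟩
      have hlthat : l ≤ that := hl.2.trans_eq hseq
      have hval := le_pairDist h0that hs0 hγhcont.continuousOn hmemt.2.2
        (l := l) ⟨hl.1, le_max_of_le_right hl.2⟩
      have h5 : pairDist that γh s η = 0 := by linarith [hdef.le]
      rw [h5, min_eq_left hlthat, min_eq_left hl.2] at hval
      have h6 : γh l - η l = 0 := by
        have := norm_nonneg (γh l - η l)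
        exact norm_eq_zero.mp (le_antisymm hval this)
      have h7 : γh l = η l := sub_eq_zero.mp h6
      exact h7.symm
    obtain ⟨k, hk⟩ := hxA
    have hmemk : Mem T (p k).1 s η := ⟨(hts_le_that k).trans hmemh.1, hmemh.2.1, hmemh.2.2⟩
    have hlt : G' k x < G' k (p k) := by
      by_contra hge
      push_neg at hge
      exact hk ⟨hmemk, hge⟩
    have hSpart : ∑ i ∈ Finset.range (k+1), δ i * R (p i) x ≤ S :=
      sum_le_hasSum _ (fun i _ => mul_nonneg (hδ i).le (hRnonneg i x hmemt)) hS
    have hGx : G' k x = F x - ∑ i ∈ Finset.range (k+1), δ i * R (p i) x := rfl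
    have := hkey k
    have hfin : F x - S < F ph - Shat := by linarith
    exact hfin
  exact ⟨that, γh, ts, gs, Shat, hγhMem, rfl, rfl, (fun i => hMem i),
    (by have h := hρhat_le 0; rw [pow_zero, one_mul] at h; exact h), (fun i => hρhat_le i), hmono_ts, hts_le_that,
    hthat_tend, hShat, hii, hiii⟩
end PHJB
end
end

section
/- For every m ∈ ℕ+, every real M ≥ 3, and every (t, γ_t) ∈ [0,T]×Λ̂: ‖γ_t‖_0^{2m} ≤ Υ^{m,M}(γ_t) ≤ M‖γ_t‖_0^{2m}. -/
set_option linter.unusedVariables false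

noncomputable section

open Set Filter Topology

namespace PHJB

variable {d n : ℕ}

/-- A càdlàg function on `[0,t]` has bounded norm there. -/
lemma bddAbove_norm_image_of_cadlag {d : ℕ} {t : ℝ} {γ : ℝ → E d}
    (h : IsCadlagOn t γ) : BddAbove ((fun l => ‖γ l‖) '' Icc 0 t) := by
  have key : ∀ x ∈ Icc (0:ℝ) t, ∃ u ∈ 𝓝[Icc (0:ℝ) t] x,
      BddAbove ((fun l => ‖γ l‖) '' u) := by
    intro x hx
    -- right part
    have h1 : ∃ C₁, ∀ᶠ l in 𝓝[Icc (0:ℝ) t ∩ Ici x] x, ‖γ l‖ ≤ C₁ := by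
      rcases lt_or_eq_of_le hx.2 with hxt | hxt
      · refine ⟨‖γ x‖ + 1, ?_⟩
        have hc := h.1 x ⟨hx.1, hxt⟩
        have hev : ∀ᶠ l in 𝓝[Ici x] x, γ l ∈ Metric.ball (γ x) 1 :=
          hc (Metric.ball_mem_nhds _ one_pos)
        have hev2 : ∀ᶠ l in 𝓝[Icc (0:ℝ) t ∩ Ici x] x, γ l ∈ Metric.ball (γ x) 1 :=
          hev.filter_mono (nhdsWithin_mono x inter_subset_right)
        refine hev2.mono fun l hl => ?_
        have : ‖γ l - γ x‖ < 1 := by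
          simpa [dist_eq_norm] using hl
        have htr := norm_sub_norm_le (γ l) (γ x)
        linarith
      · refine ⟨‖γ t‖, ?_⟩
        have hmem : Icc (0:ℝ) t ∩ Ici x ∈ 𝓝[Icc (0:ℝ) t ∩ Ici x] x :=
          self_mem_nhdsWithin
        refine Filter.eventually_iff_exists_mem.mpr ⟨_, hmem, fun l hl => ?_⟩
        have : l = t := le_antisymm hl.1.2 (hxt ▸ hl.2)
        rw [this]
    -- left part
    have h2 : ∃ C₂, ∀ᶠ l in 𝓝[Icc (0:ℝ) t ∩ Iio x] x, ‖γ l‖ ≤ C₂ := by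
      rcases lt_or_ge 0 x with hx0 | hx0
      · obtain ⟨L, hL⟩ := h.2 x ⟨hx0, hx.2⟩
        refine ⟨‖L‖ + 1, ?_⟩
        have hev : ∀ᶠ l in 𝓝[Iio x] x, γ l ∈ Metric.ball L 1 :=
          hL (Metric.ball_mem_nhds _ one_pos)
        have hev2 : ∀ᶠ l in 𝓝[Icc (0:ℝ) t ∩ Iio x] x, γ l ∈ Metric.ball L 1 :=
          hev.filter_mono (nhdsWithin_mono x inter_subset_right)
        refine hev2.mono fun l hl => ?_
        have : ‖γ l - L‖ < 1 := by simpa [dist_eq_norm] using hl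
        have htr := norm_sub_norm_le (γ l) L
        linarith
      · refine ⟨0, ?_⟩
        have hempty : Icc (0:ℝ) t ∩ Iio x = ∅ := by
          ext l
          simp only [mem_inter_iff, mem_Icc, mem_Iio, mem_empty_iff_false, iff_false]
          rintro ⟨⟨hl0, _⟩, hlx⟩
          linarith
        rw [hempty, nhdsWithin_empty]
        exact Filter.eventually_bot
    obtain ⟨C₁, hC₁⟩ := h1
    obtain ⟨C₂, hC₂⟩ := h2
    have hsplit : Icc (0:ℝ) t = (Icc (0:ℝ) t ∩ Iio x) ∪ (Icc (0:ℝ) t ∩ Ici x) := by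
      rw [← inter_union_distrib_left, Iio_union_Ici, inter_univ]
    have hev : ∀ᶠ l in 𝓝[Icc (0:ℝ) t] x, ‖γ l‖ ≤ max C₁ C₂ := by
      rw [hsplit, nhdsWithin_union, Filter.eventually_sup]
      exact ⟨hC₂.mono fun l hl => le_trans hl (le_max_right _ _),
        hC₁.mono fun l hl => le_trans hl (le_max_left _ _)⟩
    refine ⟨{l | ‖γ l‖ ≤ max C₁ C₂}, hev, ⟨max C₁ C₂, ?_⟩⟩
    rintro _ ⟨l, hl, rfl⟩
    exact hl
  exact (isCompact_Icc : IsCompact (Icc (0:ℝ) t)).induction_on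
    (by simp) (fun s u hsu hu => hu.mono (Set.image_mono hsu))
    (fun s u hs hu => by rw [Set.image_union]; exact hs.union hu) key

/-- `‖γ_t‖₀^{2m} ≤ Υ^{m,M}(γ_t) ≤ M ‖γ_t‖₀^{2m}` for `M ≥ 3`. -/
theorem ups_equivalent_to_supNorm_pow
    {d : ℕ} (T : ℝ) (hT : 0 < T) (m : ℕ) (hm : 0 < m) (M : ℝ) (hM : 3 ≤ M)
    (t : ℝ) (γ : ℝ → E d) (h : MemHat T 0 t γ) :
    supNorm t γ ^ (2*m) ≤ Ups0 m M t γ ∧ Ups0 m M t γ ≤ M * supNorm t γ ^ (2*m) := by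
  obtain ⟨ht0, htT, hcad⟩ := h
  have hbdd := bddAbove_norm_image_of_cadlag hcad
  have hpd : pairDist t γ t (fun _ => (0 : E d)) = supNorm t γ := by
    unfold pairDist supNorm
    rw [max_self]
    congr 1
    apply Set.image_congr
    intro l hl
    rw [min_eq_left hl.2, sub_zero]
  set a := supNorm t γ with ha_def
  set b := ‖γ t - (fun _ : ℝ => (0 : E d)) t‖ with hb_def
  have hb : b = ‖γ t‖ := by simp [hb_def]
  have hba : b ≤ a := by
    rw [hb]
    exact le_csSup hbdd ⟨t, ⟨ht0, le_refl t⟩, rfl⟩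
  have hb0 : (0:ℝ) ≤ b := norm_nonneg _
  have ha0 : (0:ℝ) ≤ a := le_trans hb0 hba
  unfold Ups0 Ups Sm
  rw [hpd, ← hb_def]
  rcases eq_or_lt_of_le ha0 with haz | hapos
  · have hbz : b = 0 := le_antisymm (haz ▸ hba) hb0
    rw [if_pos haz.symm, ← haz, hbz]
    have : (0:ℝ) ^ (2*m) = 0 := zero_pow (by omega)
    rw [this]
    constructor <;> nlinarith
  · rw [if_neg (ne_of_gt hapos)]
    set A := a ^ (2*m) with hA_def
    set B := b ^ (2*m) with hB_def
    have hA : 0 < A := pow_pos hapos _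
    have hB0 : (0:ℝ) ≤ B := pow_nonneg hb0 _
    have hBA : B ≤ A := pow_le_pow_left₀ hb0 hba _
    have h4 : a ^ (4*m) = A ^ 2 := by
      rw [hA_def, ← pow_mul]
      congr 1
      ring
    rw [h4]
    have hA2 : (0:ℝ) < A ^ 2 := by positivity
    constructor
    · have key : (A - M * B) * A ^ 2 ≤ (A - B) ^ 3 := by
        nlinarith [mul_nonneg hB0 (mul_nonneg hB0 (sub_nonneg.mpr hBA)),
          mul_nonneg (mul_nonneg hB0 hA.le) (sq_nonneg A),
          mul_nonneg hB0 (sq_nonneg A)]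
      have h1 : A - M * B ≤ (A - B) ^ 3 / A ^ 2 := (le_div_iff₀ hA2).mpr key
      linarith
    · have key : (A - B) ^ 3 ≤ (M * (A - B)) * A ^ 2 := by
        have hd : (0:ℝ) ≤ A - B := sub_nonneg.mpr hBA
        have h1' : (A - B) ^ 2 ≤ A ^ 2 := pow_le_pow_left₀ hd (by linarith) 2
        have hp1 : (A - B) * (A - B) ^ 2 ≤ (A - B) * A ^ 2 :=
          mul_le_mul_of_nonneg_left h1' hd
        have hp2 : (0:ℝ) ≤ (A - B) * A ^ 2 := mul_nonneg hd hA2.le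
        nlinarith [hp1, hp2]
      have h1 : (A - B) ^ 3 / A ^ 2 ≤ M * (A - B) := (div_le_iff₀ hA2).mpr key
      linarith
end PHJB
end
end

section
/- Fix m ∈ ℕ+ and (t̂, a_{t̂}) ∈ [0,T)×Λ̂_{t̂}, and set S_m^{a_{t̂}}(γ_t) := S_m(γ_t, a_{t̂}) for (t, γ_t) ∈ [t̂,T]×Λ̂^{t̂}. Then for every (t, γ_t) ∈ [t̂,T]×Λ̂^{t̂} and every i ∈ {1,…,d}, the limit ∂_{x_i}S_m^{a_{t̂}}(γ_t) = lim_{h→0}(S_m^{a_{t̂}}(γ_t^{h e_i}) − S_m^{a_{t̂}}(γ_t))/h exists and equals −6m(‖γ_t−a_{t̂}‖_0^{2m} − |γ_t(t)−a_{t̂}(t̂)|^{2m})² |γ_t(t)−a_{t̂}(t̂)|^{2m−2} ((γ_t)_i(t)−(a_{t̂})_i(t̂)) / ‖γ_t−a_{t̂}‖_0^{4m} when ‖γ_t−a_{t̂}‖_0 ≠ 0, and equals 0 when ‖γ_t−a_{t̂}‖_0 = 0 (here (γ_t)_i(t) = ⟨γ_t(t), e_i⟩, and powers |x|^0 are interpreted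 as 1). -/
set_option linter.unusedVariables false

noncomputable section

open Set Filter Topology

namespace PHJB

variable {d n : ℕ}

/-- The map `y ↦ max(y,0)³` is differentiable with derivative `3 max(y,0)²`. -/
lemma cubeMax_hasDerivAt (c : ℝ) :
    HasDerivAt (fun y : ℝ => max y 0 ^ 3) (3 * max c 0 ^ 2) c := by
  rcases lt_trichotomy c 0 with hc | hc | hc
  · have he : (fun y : ℝ => max y 0 ^ 3) =ᶠ[𝓝 c] (fun _ => (0:ℝ)) := by
      filter_upwards [Iio_mem_nhds hc] with y (hy : y < 0)
      rw [max_eq_right hy.le]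
      norm_num
    rw [max_eq_right hc.le]
    norm_num
    exact (hasDerivAt_const c (0:ℝ)).congr_of_eventuallyEq he
  · subst hc
    rw [show (3:ℝ) * max (0:ℝ) 0 ^ 2 = 0 by norm_num]
    rw [hasDerivAt_iff_tendsto_slope]
    apply squeeze_zero_norm (a := fun y : ℝ => y ^ 2)
    · intro y
      rcases le_or_gt y 0 with hy | hy
      · simp only [slope_def_field, max_eq_right hy, max_self]
        norm_num
        positivity
      · have hy' : y ≠ 0 := ne_of_gt hy
        rw [slope_def_field, max_eq_left hy.le]
        have he : ((y:ℝ) ^ 3 - max (0:ℝ) 0 ^ 3) / (y - 0) = y ^ 2 := by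
          rw [max_self]; field_simp; ring
        rw [he, Real.norm_eq_abs, abs_of_nonneg (sq_nonneg y)]
    · have h1 : Tendsto (fun y : ℝ => y ^ 2) (𝓝 0) (𝓝 0) := by
        simpa using (continuous_pow 2).tendsto (0:ℝ)
      exact h1.mono_left nhdsWithin_le_nhds
  · have he : (fun y : ℝ => max y 0 ^ 3) =ᶠ[𝓝 c] (fun y => y ^ 3) := by
      filter_upwards [Ioi_mem_nhds hc] with y (hy : 0 < y)
      rw [max_eq_left hy.le]
    rw [max_eq_left hc.le]
    have h3 : HasDerivAt (fun y : ℝ => y ^ 3) (3 * c ^ 2) c := by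
      simpa using hasDerivAt_pow 3 c
    exact h3.congr_of_eventuallyEq he

/-- explicit formula for the first vertical derivative of
`S_m^{a_{t̂}}`. -/
theorem Sm_first_vertical_derivative
    {d : ℕ} (T : ℝ) (hT : 0 < T) (m : ℕ) (hm : 0 < m)
    (that : ℝ) (h0 : 0 ≤ that) (hthatT : that < T)
    (a : ℝ → E d) (ha : IsCadlagOn that a)
    (t : ℝ) (γ : ℝ → E d) (h : MemHat T that t γ) (i : Fin d) :
    HasDerivAt (fun h' : ℝ => Sm m t (vbump t γ (h' • basis d i)) that a)
      (if pairDist t γ that a = 0 then 0 else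
        -(6 * (m:ℝ)) * (pairDist t γ that a ^ (2*m) - ‖γ t - a that‖ ^ (2*m)) ^ 2
          * ‖γ t - a that‖ ^ (2*m - 2) * (γ t i - a that i)
          / pairDist t γ that a ^ (4*m)) 0 := by
  obtain ⟨hta, htT, hγ⟩ := h
  have h0t : (0:ℝ) ≤ t := le_trans h0 hta
  set x : E d := γ t - a that with hx
  set g : ℝ → ℝ := fun l => ‖γ l - a (min l that)‖ with hg
  set A : ℝ := sSup (g '' Ico 0 t) with hA
  have hmax : max t that = t := max_eq_left hta
  -- the set defining `pairDist` of a bumped path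
  have hpd : ∀ v : E d, pairDist t (vbump t γ v) that a
      = sSup ((g '' Ico 0 t) ∪ {‖x + v‖}) := by
    intro v
    simp only [pairDist, hmax]
    congr 1
    rw [← Ico_union_right h0t, image_union, image_singleton]
    congr 1
    · apply image_congr
      intro l hl
      rw [min_eq_left hl.2.le]
      simp only [vbump, if_neg (ne_of_lt hl.2), hg]
    · rw [min_self, min_eq_right hta]
      have hvt : vbump t γ v t = γ t + v := by simp [vbump]
      rw [hvt, hx, add_sub_right_comm]
  have hvb0 : vbump t γ ((0:ℝ) • basis d i) = γ := by
    funext s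
    simp only [vbump, zero_smul, add_zero]
    split
    · next h' => rw [h']
    · rfl
  have hpdγ : pairDist t γ that a = sSup ((g '' Ico 0 t) ∪ {‖x‖}) := by
    have h1 := hpd ((0:ℝ) • basis d i)
    rw [hvb0] at h1
    simpa using h1
  by_cases hbdd : BddAbove (g '' Ico 0 t)
  · -- bounded case
    have hA0 : 0 ≤ A := by
      rw [hA]
      apply Real.sSup_nonneg
      rintro r ⟨l, -, rfl⟩
      exact norm_nonneg _
    have hpd2 : ∀ v : E d, pairDist t (vbump t γ v) that a = max A ‖x + v‖ := by
      intro v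
      rw [hpd]
      rcases eq_or_lt_of_le h0t with hteq | htpos
      · have hIe : Ico (0:ℝ) t = ∅ := by rw [← hteq]; exact Ico_self 0
        rw [hA, hIe, image_empty, empty_union, csSup_singleton, Real.sSup_empty,
            max_eq_right (norm_nonneg _)]
      · rw [csSup_union hbdd ((nonempty_Ico.mpr htpos).image g) bddAbove_singleton
            (singleton_nonempty _), csSup_singleton, ← hA]
    have hpdγ2 : pairDist t γ that a = max A ‖x‖ := by
      have h1 := hpd2 ((0:ℝ) • basis d i)
      rw [hvb0] at h1
      simpa using h1
    rcases eq_or_lt_of_le hA0 with hAz | hApos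
    · -- A = 0 : the functional vanishes identically
      have hS : (fun h' : ℝ => Sm m t (vbump t γ (h' • basis d i)) that a)
          = fun _ => (0:ℝ) := by
        funext h'
        have hN : pairDist t (vbump t γ (h' • basis d i)) that a
            = ‖x + h' • basis d i‖ := by
          rw [hpd2, ← hAz, max_eq_right (norm_nonneg _)]
        have hend : vbump t γ (h' • basis d i) t - a that = x + h' • basis d i := by
          have hvt : vbump t γ (h' • basis d i) t = γ t + h' • basis d i := by simp [vbump]
          rw [hvt, hx, add_sub_right_comm]
        simp only [Sm, hN, hend]
        split
        · rfl
        · simp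
      have htv : (if pairDist t γ that a = 0 then (0:ℝ) else
          -(6 * (m:ℝ)) * (pairDist t γ that a ^ (2*m) - ‖x‖ ^ (2*m)) ^ 2
            * ‖x‖ ^ (2*m - 2) * (γ t i - a that i)
            / pairDist t γ that a ^ (4*m)) = 0 := by
        rw [hpdγ2, ← hAz, max_eq_right (norm_nonneg _)]
        split
        · rfl
        · simp
      rw [hS, htv]
      exact hasDerivAt_const 0 0
    · -- A > 0
      have hend : ∀ h' : ℝ, vbump t γ (h' • basis d i) t - a that
          = x + h' • basis d i := by
        intro h'
        have hvt : vbump t γ (h' • basis d i) t = γ t + h' • basis d i := by simp [vbump]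
        rw [hvt, hx, add_sub_right_comm]
      have hNsq : ∀ h' : ℝ, ‖x + h' • basis d i‖ ^ 2
          = ‖x‖ ^ 2 + 2 * h' * x i + h' ^ 2 := by
        intro h'
        rw [norm_add_sq_real]
        have h1 : (inner ℝ x (h' • basis d i) : ℝ) = h' * x i := by
          rw [real_inner_smul_right]
          simp [basis, EuclideanSpace.inner_single_right]
        have h2 : ‖h' • basis d i‖ ^ 2 = h' ^ 2 := by
          rw [norm_smul]
          simp [basis, sq_abs]
        rw [h1, h2]
        ring
      have hSeq : (fun h' : ℝ => Sm m t (vbump t γ (h' • basis d i)) that a)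
          = fun h' : ℝ => (max (A ^ (2*m) - (‖x‖ ^ 2 + 2 * h' * x i + h' ^ 2) ^ m) 0) ^ 3
              / A ^ (4*m) := by
        funext h'
        have hD := hpd2 (h' • basis d i)
        have hDpos : (0:ℝ) < max A ‖x + h' • basis d i‖ :=
          lt_of_lt_of_le hApos (le_max_left _ _)
        have hq : (‖x‖ ^ 2 + 2 * h' * x i + h' ^ 2) ^ m = ‖x + h' • basis d i‖ ^ (2*m) := by
          rw [← hNsq, ← pow_mul, mul_comm 2 m, pow_mul, ← pow_mul, mul_comm m 2]
        simp only [Sm, hD, hend h', if_neg hDpos.ne', hq]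
        rcases le_total ‖x + h' • basis d i‖ A with hc | hc
        · rw [max_eq_left hc,
            max_eq_left (sub_nonneg.mpr (pow_le_pow_left₀ (norm_nonneg _) hc _))]
        · rw [max_eq_right hc, sub_self,
            max_eq_right (sub_nonpos.mpr (pow_le_pow_left₀ hA0 hc _))]
          norm_num
      rw [hSeq]
      -- build the derivative
      have hqd : HasDerivAt (fun h' : ℝ => ‖x‖ ^ 2 + 2 * h' * x i + h' ^ 2) (2 * x i) 0 := by
        have h1 : HasDerivAt (fun h' : ℝ => 2 * h' * x i) (2 * x i) 0 := by
          simpa using ((hasDerivAt_id (0:ℝ)).const_mul 2).mul_const (x i)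
        have h2 : HasDerivAt (fun h' : ℝ => h' ^ 2) 0 0 := by
          simpa using hasDerivAt_pow 2 (0:ℝ)
        exact (((hasDerivAt_const (0:ℝ) (‖x‖ ^ 2)).add h1).add h2).congr_deriv (by ring)
      have hqm : HasDerivAt (fun h' : ℝ => (‖x‖ ^ 2 + 2 * h' * x i + h' ^ 2) ^ m)
          ((m : ℝ) * (‖x‖ ^ 2) ^ (m - 1) * (2 * x i)) 0 := by
        exact (hqd.pow m).congr_deriv (by simp)
      have hu : HasDerivAt (fun h' : ℝ => A ^ (2*m) - (‖x‖ ^ 2 + 2 * h' * x i + h' ^ 2) ^ m)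
          (-((m : ℝ) * (‖x‖ ^ 2) ^ (m - 1) * (2 * x i))) 0 := by
        exact ((hasDerivAt_const (0:ℝ) (A ^ (2*m))).sub hqm).congr_deriv (by ring)
      have hcomp : HasDerivAt
          (fun h' : ℝ => max (A ^ (2*m) - (‖x‖ ^ 2 + 2 * h' * x i + h' ^ 2) ^ m) 0 ^ 3)
          ((3 * max (A ^ (2*m) - (‖x‖ ^ 2) ^ m) 0 ^ 2)
            * -((m : ℝ) * (‖x‖ ^ 2) ^ (m - 1) * (2 * x i))) 0 := by
        have h2 : (fun h' : ℝ => max (A ^ (2*m) - (‖x‖ ^ 2 + 2 * h' * x i + h' ^ 2) ^ m) 0 ^ 3)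
            = (fun y : ℝ => max y 0 ^ 3)
              ∘ (fun h' : ℝ => A ^ (2*m) - (‖x‖ ^ 2 + 2 * h' * x i + h' ^ 2) ^ m) := rfl
        have h3 : A ^ (2*m) - (‖x‖ ^ 2) ^ m
            = A ^ (2*m) - (‖x‖ ^ 2 + 2 * 0 * x i + 0 ^ 2) ^ m := by norm_num
        rw [h2, h3]
        exact HasDerivAt.comp 0
          (cubeMax_hasDerivAt (A ^ (2*m) - (‖x‖ ^ 2 + 2 * 0 * x i + 0 ^ 2) ^ m)) hu
      have hfinal := hcomp.div_const (A ^ (4*m))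
      -- identify the two derivative values
      have hDne : pairDist t γ that a ≠ 0 := by
        rw [hpdγ2]
        exact (lt_of_lt_of_le hApos (le_max_left _ _)).ne'
      rw [if_neg hDne]
      refine hfinal.congr_deriv ?_
      have hxi : x i = γ t i - a that i := by rw [hx]; rfl
      have hp1 : (‖x‖ ^ 2) ^ m = ‖x‖ ^ (2*m) := by
        rw [← pow_mul, mul_comm 2 m, pow_mul, ← pow_mul, mul_comm m 2, pow_mul]
      have hp2 : (‖x‖ ^ 2) ^ (m - 1) = ‖x‖ ^ (2*m - 2) := by
        rw [← pow_mul]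
        congr 1
        omega
      rcases le_total ‖x‖ A with hc | hc
      · rw [hpdγ2, max_eq_left hc,
          max_eq_left (by rw [hp1]; exact sub_nonneg.mpr (pow_le_pow_left₀ (norm_nonneg _) hc _)),
          hp1, hp2, hxi]
        ring
      · rw [hpdγ2, max_eq_right hc, sub_self,
          max_eq_right (by rw [hp1]; exact sub_nonpos.mpr (pow_le_pow_left₀ hA0 hc _))]
        norm_num
  · -- unbounded case: all the suprema are `0`
    have hz : ∀ b : ℝ, sSup ((g '' Ico 0 t) ∪ {b}) = 0 := fun b =>
      Real.sSup_of_not_bddAbove (fun hb => hbdd (hb.mono subset_union_left))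
    have hS : (fun h' : ℝ => Sm m t (vbump t γ (h' • basis d i)) that a)
        = fun _ => (0:ℝ) := by
      funext h'
      simp only [Sm]
      rw [hpd (h' • basis d i), hz]
      simp
    have hγz : pairDist t γ that a = 0 := by rw [hpdγ, hz]
    rw [hS, if_pos hγz]
    exact hasDerivAt_const 0 0
end PHJB
end
end

section
/- Fix m ∈ ℕ+ and (t̂, a_{t̂}) ∈ [0,T)×Λ̂_{t̂}, set S_m^{a_{t̂}}(γ_t) := S_m(γ_t, a_{t̂}), and let ∂_{x_i}S_m^{a_{t̂}} denote the first vertical derivative, which at every (t,γ_t) ∈ [t̂,T]×Λ̂^{t̂} equals −6m(‖γ_t−a_{t̂}‖_0^{2m} − |γ_t(t)−a_{t̂}(t̂)|^{2m})² |γ_t(t)−a_{t̂}(t̂)|^{2m−2} ((γ_t)_i(t)−(a_{t̂})_i(t̂)) / ‖γ_t−a_{t̂}‖_0^{4m} if ‖γ_t−a_{t̂}‖_0 ≠ 0 and 0 otherwise. Then for all i, j ∈ {1,…,d} and every (t,γ_t) ∈ [t̂,T]×Λ̂^{t̂}, the limit ∂_{x_j x_i}S_m^{a_{t̂}}(γ_t)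 = lim_{h→0}(∂_{x_i}S_m^{a_{t̂}}(γ_t^{h e_j}) − ∂_{x_i}S_m^{a_{t̂}}(γ_t))/h exists and, writing v = γ_t(t)−a_{t̂}(t̂), N = ‖γ_t−a_{t̂}‖_0, equals [24m²(N^{2m} − |v|^{2m})|v|^{4m−4} v_i v_j − 12m(m−1)(N^{2m} − |v|^{2m})² |v|^{2m−4} v_i v_j − 6m(N^{2m} − |v|^{2m})² |v|^{2m−2} 1_{i=j}] / N^{4m} when N ≠ 0, and equals 0 when N = 0 (powers |x|^0 interpreted as 1, and terms with coefficient 0 omitted). -/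
set_option linter.unusedVariables false

noncomputable section

open Set Filter Topology

namespace PHJB

variable {d n : ℕ}

section AuxSm

lemma sSup_insert_max' {B : Set ℝ} (hbdd : BddAbove B) (hpos : ∀ b ∈ B, 0 ≤ b)
    {q : ℝ} (hq : 0 ≤ q) :
    sSup (insert q B) = max q (sSup (insert 0 B)) := by
  rcases B.eq_empty_or_nonempty with rfl | hne
  · simp [csSup_singleton, max_eq_left hq]
  · obtain ⟨b, hb⟩ := hne
    have h0B : 0 ≤ sSup B := le_trans (hpos b hb) (le_csSup hbdd hb)
    rw [csSup_insert hbdd ⟨b, hb⟩, csSup_insert hbdd ⟨b, hb⟩]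
    show max q (sSup B) = max q (max 0 (sSup B))
    rw [max_eq_right h0B]

lemma pairDist_vbump_eq {d : ℕ} {that t : ℝ} (h0 : 0 ≤ that) (hle : that ≤ t)
    (γ a : ℝ → E d) (x : E d) :
    pairDist t (vbump t γ x) that a
      = sSup (insert ‖γ t + x - a that‖
          ((fun l => ‖γ l - a (min l that)‖) '' Ico 0 t)) := by
  unfold pairDist
  rw [max_eq_left hle]
  congr 1
  rw [show Icc (0:ℝ) t = insert t (Ico 0 t) from (Set.Ico_insert_right (h0.trans hle)).symm,
    Set.image_insert_eq]
  congr 1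
  · simp [vbump, min_eq_right hle]
  · refine Set.image_congr fun l hl => ?_
    rw [min_eq_left hl.2.le]
    simp [vbump, hl.2.ne]

end AuxSm

set_option maxHeartbeats 2000000 in
/-- explicit formula for the second vertical derivative of
`S_m^{a_{t̂}}` (derivative in direction `e_j` of the first vertical derivative in
direction `e_i`). -/
theorem Sm_second_vertical_derivative
    {d : ℕ} (T : ℝ) (hT : 0 < T) (m : ℕ) (hm : 0 < m)
    (that : ℝ) (h0 : 0 ≤ that) (hthatT : that < T)
    (a : ℝ → E d) (ha : IsCadlagOn that a)
    (i j : Fin d)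
    (g : ℝ → (ℝ → E d) → ℝ)
    (hg : ∀ s η, g s η = if pairDist s η that a = 0 then 0 else
      -(6 * (m:ℝ)) * (pairDist s η that a ^ (2*m) - ‖η s - a that‖ ^ (2*m)) ^ 2
        * ‖η s - a that‖ ^ (2*m - 2) * (η s i - a that i)
        / pairDist s η that a ^ (4*m))
    (t : ℝ) (γ : ℝ → E d) (h : MemHat T that t γ) :
    HasDerivAt (fun h' : ℝ => g t (vbump t γ (h' • basis d j)))
      (if pairDist t γ that a = 0 then 0 else
        (24 * (m:ℝ)^2 * (pairDist t γ that a ^ (2*m) - ‖γ t - a that‖ ^ (2*m))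
            * ‖γ t - a that‖ ^ (4*m - 4) * (γ t i - a that i) * (γ t j - a that j)
         - 12 * (m:ℝ) * ((m:ℝ) - 1)
            * (pairDist t γ that a ^ (2*m) - ‖γ t - a that‖ ^ (2*m)) ^ 2
            * ‖γ t - a that‖ ^ (2*m - 4) * (γ t i - a that i) * (γ t j - a that j)
         - 6 * (m:ℝ) * (pairDist t γ that a ^ (2*m) - ‖γ t - a that‖ ^ (2*m)) ^ 2
            * ‖γ t - a that‖ ^ (2*m - 2) * (if i = j then (1:ℝ) else 0))
        / pairDist t γ that a ^ (4*m)) 0 := by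
  obtain ⟨hta, htT, hcad⟩ := h
  set v : E d := γ t - a that with hvdef
  set δ : ℝ := (if i = j then (1:ℝ) else 0) with hδdef
  set B : Set ℝ := (fun l => ‖γ l - a (min l that)‖) '' Ico 0 t with hBdef
  have hm1 : 1 ≤ m := hm
  have hvi : γ t i - a that i = v i := by rw [hvdef]; simp
  have hvj : γ t j - a that j = v j := by rw [hvdef]; simp
  have hejn : ‖basis d j‖ = 1 := by simp [basis]
  have heji : basis d j i = δ := by rw [hδdef]; simp [basis, EuclideanSpace.single_apply]
  have hq : ∀ h' : ℝ, ‖v + h' • basis d j‖ ^ 2 = ‖v‖^2 + 2*(v j)*h' + h'^2 := by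
    intro h'
    have hinner : (inner ℝ v (basis d j) : ℝ) = v j := by
      simp [basis, EuclideanSpace.inner_single_right]
    rw [norm_add_sq_real, real_inner_smul_right, hinner, norm_smul, hejn, mul_one,
      Real.norm_eq_abs, sq_abs]
    ring
  have hNx : ∀ x : E d, pairDist t (vbump t γ x) that a = sSup (insert ‖v + x‖ B) := by
    intro x
    rw [pairDist_vbump_eq h0 hta γ a x, ← hBdef]
    have hx : γ t + x - a that = v + x := by rw [hvdef]; abel
    rw [hx]
  have hγ0 : vbump t γ (0 : E d) = γ := by
    funext s
    by_cases hs : s = t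
    · subst hs; simp [vbump]
    · simp [vbump, hs]
  have hN0 : pairDist t γ that a = sSup (insert ‖v‖ B) := by
    have h1 := hNx 0
    rw [hγ0] at h1
    simpa using h1
  have hBpos : ∀ b ∈ B, 0 ≤ b := by
    rintro b ⟨l, -, rfl⟩; exact norm_nonneg _
  clear_value v δ B
  by_cases hbdd : BddAbove B
  · set Q : ℝ := sSup (insert 0 B) with hQdef
    have hQ0 : 0 ≤ Q := le_csSup (hbdd.insert 0) (Set.mem_insert 0 B)
    have hNmax : ∀ x : E d, pairDist t (vbump t γ x) that a = max ‖v + x‖ Q := by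
      intro x
      rw [hNx x]
      exact sSup_insert_max' hbdd hBpos (norm_nonneg _)
    have hN0' : pairDist t γ that a = max ‖v‖ Q := by
      rw [hN0]
      exact sSup_insert_max' hbdd hBpos (norm_nonneg _)
    clear_value Q
    have hval : ∀ h' : ℝ,
        g t (vbump t γ (h' • basis d j)) =
          if max ‖v + h' • basis d j‖ Q = 0 then 0 else
            -(6*(m:ℝ)) * (max ‖v + h' • basis d j‖ Q ^ (2*m) - ‖v + h' • basis d j‖ ^ (2*m)) ^ 2
              * ‖v + h' • basis d j‖ ^ (2*m-2) * (v i + h' * δ)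
              / max ‖v + h' • basis d j‖ Q ^ (4*m) := by
      intro h'
      have h1 : vbump t γ (h' • basis d j) t - a that = v + h' • basis d j := by
        rw [show vbump t γ (h' • basis d j) t = γ t + h' • basis d j from by simp [vbump],
          hvdef]
        abel
      have h2 : vbump t γ (h' • basis d j) t i - a that i = v i + h' * δ := by
        rw [← PiLp.sub_apply, h1, PiLp.add_apply, PiLp.smul_apply, smul_eq_mul, heji]
      rw [hg, hNmax (h' • basis d j), h1, h2]
    have hqf' : HasDerivAt (fun h' : ℝ => ‖v‖^2 + 2*(v j)*h' + h'^2) (2*(v j)) 0 := by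
      have h1 : HasDerivAt (fun h' : ℝ => ‖v‖^2 + 2*(v j)*h') (2*(v j)) 0 := by
        simpa using ((hasDerivAt_id (0:ℝ)).const_mul (2*(v j))).const_add (‖v‖^2)
      exact (h1.add (hasDerivAt_pow 2 (0:ℝ))).congr_deriv (by norm_num)
    rcases lt_trichotomy ‖v‖ Q with hlt | heqv | hgt
    · -- ‖v‖ < Q : the genuine computation
      have hQpos : 0 < Q := lt_of_le_of_lt (norm_nonneg v) hlt
      have hpd : pairDist t γ that a = Q := by rw [hN0', max_eq_right hlt.le]
      have hbig := ((((hasDerivAt_const (0:ℝ) (Q^(2*m))).sub (hqf'.pow m)).pow 2).mul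
          (hqf'.pow (m-1))).mul (((hasDerivAt_id (0:ℝ)).mul_const δ).const_add (v i))
      have hP := (hbig.const_mul (-(6*(m:ℝ)))).div_const (Q^(4*m))
      have hev : (fun h' : ℝ => g t (vbump t γ (h' • basis d j))) =ᶠ[𝓝 (0:ℝ)]
          (fun h' : ℝ => -(6*(m:ℝ)) * ((Q^(2*m) - (‖v‖^2 + 2*(v j)*h' + h'^2)^m)^2 *
            (‖v‖^2 + 2*(v j)*h' + h'^2)^(m-1) * (v i + h' * δ)) / Q^(4*m)) := by
        have h1 : ∀ᶠ h' : ℝ in 𝓝 (0:ℝ), |h'| < Q - ‖v‖ := by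
          filter_upwards [Metric.ball_mem_nhds (0:ℝ) (by linarith : (0:ℝ) < Q - ‖v‖)] with x hx
          simpa [Real.dist_eq] using hx
        filter_upwards [h1] with h' hh'
        have hnf : ‖v + h' • basis d j‖ ≤ ‖v‖ + |h'| := by
          calc ‖v + h' • basis d j‖ ≤ ‖v‖ + ‖h' • basis d j‖ := norm_add_le _ _
            _ = ‖v‖ + |h'| := by rw [norm_smul, hejn, mul_one, Real.norm_eq_abs]
        have hmax : max ‖v + h' • basis d j‖ Q = Q := max_eq_right (by linarith)
        rw [hval h', hmax, if_neg hQpos.ne']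
        rw [show ‖v + h' • basis d j‖ ^ (2*m) = (‖v‖^2 + 2*(v j)*h' + h'^2)^m from by
            rw [← hq h', ← pow_mul],
          show ‖v + h' • basis d j‖ ^ (2*m-2) = (‖v‖^2 + 2*(v j)*h' + h'^2)^(m-1) from by
            rw [← hq h', ← pow_mul]; congr 1; omega]
        ring
      have hder := hP.congr_of_eventuallyEq hev
      rw [hpd, if_neg hQpos.ne']
      refine hder.congr_deriv ?_
      rw [hvi, hvj]
      rw [show ‖v‖^(2*m) = (‖v‖^2)^m from pow_mul _ 2 m,
        show ‖v‖^(4*m-4) = (‖v‖^2)^(m-1) * (‖v‖^2)^(m-1) from by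
          rw [← pow_mul, ← pow_add]; congr 1; omega,
        show ‖v‖^(2*m-4) = (‖v‖^2)^(m-1-1) from by rw [← pow_mul]; congr 1; omega,
        show ‖v‖^(2*m-2) = (‖v‖^2)^(m-1) from by rw [← pow_mul]; congr 1; omega]
      simp only [id_eq, Pi.sub_apply, Pi.pow_apply, Pi.mul_apply]
      rw [Nat.cast_sub hm1]
      push_cast
      ring
    · -- ‖v‖ = Q : squeeze, derivative 0
      by_cases hQz : Q = 0
      · have hpd0 : pairDist t γ that a = 0 := by
          rw [hN0', heqv, hQz]; simp
        rw [if_pos hpd0]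
        have hfun : (fun h' : ℝ => g t (vbump t γ (h' • basis d j))) = fun _ => 0 := by
          funext h'
          rw [hval h', hQz, max_eq_left (norm_nonneg _)]
          split
          · rfl
          · rw [sub_self]
            simp
        rw [hfun]
        exact hasDerivAt_const 0 0
      · have hQpos : 0 < Q := lt_of_le_of_ne hQ0 (Ne.symm hQz)
        have hpd : pairDist t γ that a = Q := by rw [hN0', heqv, max_self]
        have hp0' : (‖v‖^2)^m = Q^(2*m) := by rw [← pow_mul, heqv]
        have hG : HasDerivAt (fun h' : ℝ => 6*(m:ℝ) *
            ((Q^(2*m) - (‖v‖^2 + 2*(v j)*h' + h'^2)^m)^2 * (‖v‖^2 + 2*(v j)*h' + h'^2)^(m-1)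
              * (|v i| + 1)) / Q^(4*m)) 0 0 := by
          have hbig := ((((hasDerivAt_const (0:ℝ) (Q^(2*m))).sub (hqf'.pow m)).pow 2).mul
            (hqf'.pow (m-1))).mul_const (|v i| + 1)
          have h2 := (hbig.const_mul (6*(m:ℝ))).div_const (Q^(4*m))
          refine h2.congr_deriv ?_
          simp [hp0']
        have hGs := hasDerivAt_iff_tendsto_slope.mp hG
        have hG0 : 6*(m:ℝ) * ((Q^(2*m) - (‖v‖^2 + 2*(v j)*(0:ℝ) + (0:ℝ)^2)^m)^2
            * (‖v‖^2 + 2*(v j)*(0:ℝ) + (0:ℝ)^2)^(m-1) * (|v i| + 1)) / Q^(4*m) = 0 := by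
          simp [hp0']
        have hf0 : g t (vbump t γ ((0:ℝ) • basis d j)) = 0 := by
          rw [hval 0]
          simp only [zero_smul, add_zero]
          rw [heqv, max_self, if_neg hQpos.ne', sub_self]
          simp
        have hbound : ∀ᶠ h' : ℝ in 𝓝[≠] (0:ℝ),
            ‖slope (fun h'' : ℝ => g t (vbump t γ (h'' • basis d j))) 0 h'‖ ≤
            |slope (fun h'' : ℝ => 6*(m:ℝ) * ((Q^(2*m) - (‖v‖^2 + 2*(v j)*h'' + h''^2)^m)^2
              * (‖v‖^2 + 2*(v j)*h'' + h''^2)^(m-1) * (|v i| + 1)) / Q^(4*m)) 0 h'| := by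
          have hsm : ∀ᶠ h' : ℝ in 𝓝[≠] (0:ℝ), |h'| < 1 := by
            refine Filter.Eventually.filter_mono nhdsWithin_le_nhds ?_
            filter_upwards [Metric.ball_mem_nhds (0:ℝ) one_pos] with x hx
            simpa [Real.dist_eq] using hx
          filter_upwards [hsm, self_mem_nhdsWithin] with h' hh1 hne
          have hne' : h' ≠ 0 := hne
          set nf : ℝ := ‖v + h' • basis d j‖ with hnfdef
          clear_value nf
          have hnfnn : 0 ≤ nf := by rw [hnfdef]; exact norm_nonneg _
          have hnf2 : nf^(2*m) = (nf^2)^m := pow_mul nf 2 m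
          have hnf3 : nf^(2*m-2) = (nf^2)^(m-1) := by rw [← pow_mul]; congr 1; omega
          have hNQ : Q ≤ max nf Q := le_max_right _ _
          have hNpos : (0:ℝ) < max nf Q := lt_of_lt_of_le hQpos hNQ
          have hfv : g t (vbump t γ (h' • basis d j)) =
              -(6*(m:ℝ)) * ((max nf Q)^(2*m) - (nf^2)^m)^2 * (nf^2)^(m-1) * (v i + h'*δ)
                / (max nf Q)^(4*m) := by
            rw [hval h', ← hnfdef, if_neg hNpos.ne', hnf2, hnf3]
          have hD1 : (nf^2)^m ≤ (max nf Q)^(2*m) := by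
            calc (nf^2)^m = nf^(2*m) := hnf2.symm
              _ ≤ (max nf Q)^(2*m) := pow_le_pow_left₀ hnfnn (le_max_left _ _) _
          have hD2 : (max nf Q)^(2*m) - (nf^2)^m ≤ |Q^(2*m) - (nf^2)^m| := by
            rcases le_total nf Q with hle | hle
            · rw [max_eq_right hle]
              exact le_abs_self _
            · rw [max_eq_left hle, ← hnf2, sub_self]
              exact abs_nonneg _
          have hDsq : ((max nf Q)^(2*m) - (nf^2)^m)^2 ≤ (Q^(2*m) - (nf^2)^m)^2 := by
            rw [← sq_abs (Q^(2*m) - (nf^2)^m)]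
            exact pow_le_pow_left₀ (by linarith) hD2 2
          have hlin : |v i + h'*δ| ≤ |v i| + 1 := by
            have hδ1 : |δ| ≤ 1 := by rw [hδdef]; split <;> simp
            calc |v i + h'*δ| ≤ |v i| + |h'*δ| := abs_add_le _ _
              _ ≤ |v i| + 1 := by
                  rw [abs_mul]
                  nlinarith [abs_nonneg h', abs_nonneg δ]
          have hQpow : Q^(4*m) ≤ (max nf Q)^(4*m) := pow_le_pow_left₀ hQ0 hNQ _
          have habs : |g t (vbump t γ (h' • basis d j))| ≤
              6*(m:ℝ) * ((Q^(2*m) - (nf^2)^m)^2 * (nf^2)^(m-1) * (|v i| + 1)) / Q^(4*m) := by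
            rw [hfv, abs_div, abs_mul, abs_mul, abs_mul, abs_neg]
            rw [abs_of_nonneg (by positivity : (0:ℝ) ≤ 6*(m:ℝ)),
              abs_of_nonneg (sq_nonneg ((max nf Q)^(2*m) - (nf^2)^m)),
              abs_of_nonneg (by positivity : (0:ℝ) ≤ (nf^2)^(m-1)),
              abs_of_nonneg (by positivity : (0:ℝ) ≤ (max nf Q)^(4*m))]
            refine div_le_div₀ (by positivity) ?_ (by positivity) hQpow
            calc 6*(m:ℝ) * ((max nf Q)^(2*m) - (nf^2)^m)^2 * (nf^2)^(m-1) * |v i + h'*δ|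
                ≤ 6*(m:ℝ) * (Q^(2*m) - (nf^2)^m)^2 * (nf^2)^(m-1) * (|v i| + 1) := by
                  gcongr
              _ = 6*(m:ℝ) * ((Q^(2*m) - (nf^2)^m)^2 * (nf^2)^(m-1) * (|v i| + 1)) := by ring
          have hslopef : ‖slope (fun h'' : ℝ => g t (vbump t γ (h'' • basis d j))) 0 h'‖
              = |g t (vbump t γ (h' • basis d j))| / |h'| := by
            rw [slope_def_field, hf0, sub_zero, sub_zero, Real.norm_eq_abs, abs_div]
          have hslopeG : |slope (fun h'' : ℝ => 6*(m:ℝ) *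
              ((Q^(2*m) - (‖v‖^2 + 2*(v j)*h'' + h''^2)^m)^2
              * (‖v‖^2 + 2*(v j)*h'' + h''^2)^(m-1) * (|v i| + 1)) / Q^(4*m)) 0 h'|
              = (6*(m:ℝ) * ((Q^(2*m) - (nf^2)^m)^2 * (nf^2)^(m-1) * (|v i| + 1)) / Q^(4*m))
                / |h'| := by
            rw [slope_def_field, hG0, sub_zero, sub_zero, abs_div, ← hq h', ← hnfdef]
            congr 1
            exact abs_of_nonneg (div_nonneg (by positivity) (pow_nonneg hQ0 _))
          rw [hslopef, hslopeG]
          exact div_le_div_of_nonneg_right habs (abs_nonneg _)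
        have htend := squeeze_zero_norm' hbound (by simpa using hGs.abs)
        have hder : HasDerivAt (fun h' : ℝ => g t (vbump t γ (h' • basis d j))) 0 0 :=
          hasDerivAt_iff_tendsto_slope.mpr htend
        convert hder using 1
        rw [hpd, if_neg hQpos.ne', heqv, sub_self]
        ring
    · -- Q < ‖v‖ : eventually zero
      have hvpos : (0:ℝ) < ‖v‖ := lt_of_le_of_lt hQ0 hgt
      have hpd : pairDist t γ that a = ‖v‖ := by rw [hN0', max_eq_left hgt.le]
      have hev : (fun h' : ℝ => g t (vbump t γ (h' • basis d j))) =ᶠ[𝓝 (0:ℝ)]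
          (fun _ => (0:ℝ)) := by
        have h1 : ∀ᶠ h' : ℝ in 𝓝 (0:ℝ), |h'| < ‖v‖ - Q := by
          filter_upwards [Metric.ball_mem_nhds (0:ℝ) (by linarith : (0:ℝ) < ‖v‖ - Q)] with x hx
          simpa [Real.dist_eq] using hx
        filter_upwards [h1] with h' hh'
        have hlow : ‖v‖ - |h'| ≤ ‖v + h' • basis d j‖ := by
          have h2 : ‖v‖ ≤ ‖v + h' • basis d j‖ + |h'| := by
            calc ‖v‖ = ‖(v + h' • basis d j) - h' • basis d j‖ := by congr 1; abel
              _ ≤ ‖v + h' • basis d j‖ + ‖h' • basis d j‖ := norm_sub_le _ _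
              _ = ‖v + h' • basis d j‖ + |h'| := by
                  rw [norm_smul, hejn, mul_one, Real.norm_eq_abs]
          linarith
        have hmax : max ‖v + h' • basis d j‖ Q = ‖v + h' • basis d j‖ :=
          max_eq_left (by linarith)
        have hpos : (0:ℝ) < ‖v + h' • basis d j‖ := by linarith
        rw [hval h', hmax, if_neg hpos.ne', sub_self]
        simp
      have hder := (hasDerivAt_const (0:ℝ) (0:ℝ)).congr_of_eventuallyEq hev
      refine hder.congr_deriv ?_
      rw [hpd, if_neg hvpos.ne', sub_self]
      ring
  · -- B unbounded: pairDist is identically 0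
    have hnb : ∀ q : ℝ, ¬ BddAbove (insert q B) := fun q hb =>
      hbdd (hb.mono (Set.subset_insert _ _))
    have hz : ∀ x : E d, pairDist t (vbump t γ x) that a = 0 := fun x => by
      rw [hNx x]; exact Real.sSup_of_not_bddAbove (hnb _)
    have hz0 : pairDist t γ that a = 0 := by
      rw [hN0]; exact Real.sSup_of_not_bddAbove (hnb _)
    rw [if_pos hz0]
    have hfun : (fun h' : ℝ => g t (vbump t γ (h' • basis d j))) = fun _ => 0 := by
      funext h'
      rw [hg, hz (h' • basis d j), if_pos rfl]
    rw [hfun]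
    exact hasDerivAt_const 0 0
end PHJB
end
end

section
/- For every m ∈ ℕ+, every real M ≥ 3, and every t ∈ [0,T] and γ_t, η_t ∈ Λ̂_t: Υ^{m,M}(γ_t + η_t) ≤ 2^{2m−1}(Υ^{m,M}(γ_t) + Υ^{m,M}(η_t)), where γ_t + η_t denotes the pointwise sum of the two paths. -/
set_option linter.unusedVariables false

noncomputable section

open Set Filter Topology

namespace PHJB

variable {d n : ℕ}

section UpsAux

private lemma ups_radon2 (a b x y : ℝ) (ha : 0 ≤ a) (hb : 0 ≤ b) (hx : 0 < x) (hy : 0 < y) :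
    (a+b)^3/(x+y)^2 ≤ a^3/x^2 + b^3/y^2 := by
  rw [div_add_div _ _ (by positivity) (by positivity),
    div_le_div_iff₀ (by positivity) (by positivity)]
  nlinarith [mul_nonneg (mul_nonneg hx.le (sq_nonneg (a*y - b*x))) (by positivity : (0:ℝ) ≤ 2*a*y + b*x),
    mul_nonneg (mul_nonneg hy.le (sq_nonneg (b*x - a*y))) (by positivity : (0:ℝ) ≤ 2*b*x + a*y)]

private lemma ups_mono_x (x x' y : ℝ) (hy : 0 ≤ y) (hyx : y ≤ x) (hxx : x ≤ x') :
    (x-y)^3/x^2 ≤ (x'-y)^3/x'^2 := by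
  rcases eq_or_lt_of_le (hy.trans hyx) with h0 | h0
  · have hy0 : y = 0 := le_antisymm (hyx.trans h0.symm.le) hy
    have hx'0 : 0 ≤ x' := h0.le.trans hxx
    subst hy0; rw [← h0]
    simp only [sub_zero]
    norm_num
    exact div_nonneg (pow_nonneg hx'0 _) (sq_nonneg _)
  · have hx'0 : 0 < x' := h0.trans_le hxx
    rw [div_le_div_iff₀ (by positivity) (by positivity)]
    have hc : 0 ≤ x' - x := sub_nonneg.2 hxx
    have ha : 0 ≤ x - y := sub_nonneg.2 hyx
    nlinarith [mul_nonneg (mul_nonneg (mul_nonneg (sq_nonneg (x-y)) hc) h0.le) hy,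
      mul_nonneg (mul_nonneg (mul_nonneg ha (sq_nonneg (x'-x))) hy) (by linarith : (0:ℝ) ≤ x + (x - y)),
      mul_nonneg (mul_nonneg (sq_nonneg (x-y)) hc) (sq_nonneg x),
      mul_nonneg (mul_nonneg ha (sq_nonneg (x'-x))) (sq_nonneg x),
      mul_nonneg (mul_nonneg (mul_nonneg hc hc) hc) (sq_nonneg x)]

private lemma ups_mono_y (M x y y' : ℝ) (hM : 3 ≤ M) (hy : 0 ≤ y) (hyy : y ≤ y') (hyx : y' ≤ x) :
    (x-y)^3/x^2 + M*y ≤ (x-y')^3/x^2 + M*y' := by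
  rcases eq_or_lt_of_le ((hy.trans hyy).trans hyx) with h0 | h0
  · have h1 : y' = 0 := le_antisymm (hyx.trans h0.symm.le) (hy.trans hyy)
    have h2 : y = 0 := le_antisymm (hyy.trans h1.le) hy
    simp [h1, h2]
  · have key : (x-y)^3/x^2 - (x-y')^3/x^2 ≤ M*y' - M*y := by
      rw [div_sub_div_same, div_le_iff₀ (by positivity)]
      have hd : 0 ≤ y' - y := sub_nonneg.2 hyy
      nlinarith [mul_nonneg hd (mul_nonneg hy (by linarith : (0:ℝ) ≤ 2*x - y)),
        mul_nonneg hd (mul_nonneg (hy.trans hyy) (by linarith : (0:ℝ) ≤ 2*x - y')),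
        mul_nonneg hd (mul_nonneg hy h0.le),
        mul_nonneg hd (mul_nonneg (hy.trans hyy) (by linarith : (0:ℝ) ≤ x - y)),
        mul_nonneg (mul_nonneg hd (sq_nonneg x)) (by linarith : (0:ℝ) ≤ M - 3)]
    linarith

private lemma ups_subadd (x1 x2 y1 y2 : ℝ) (hy1 : 0 ≤ y1) (hy2 : 0 ≤ y2)
    (h1 : y1 ≤ x1) (h2 : y2 ≤ x2) :
    (x1 + x2 - (y1 + y2))^3/(x1+x2)^2 ≤ (x1-y1)^3/x1^2 + (x2-y2)^3/x2^2 := by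
  rcases eq_or_lt_of_le (hy1.trans h1) with hx1 | hx1
  · have : y1 = 0 := le_antisymm (h1.trans hx1.symm.le) hy1
    rw [← hx1, this]; ring_nf; norm_num
  · rcases eq_or_lt_of_le (hy2.trans h2) with hx2 | hx2
    · have : y2 = 0 := le_antisymm (h2.trans hx2.symm.le) hy2
      rw [← hx2, this]; ring_nf; norm_num
    · have := ups_radon2 (x1-y1) (x2-y2) x1 x2 (by linarith) (by linarith) hx1 hx2
      calc (x1 + x2 - (y1 + y2))^3/(x1+x2)^2
          = ((x1-y1)+(x2-y2))^3/(x1+x2)^2 := by ring_nf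
        _ ≤ _ := this

private lemma ups_homog (l x y : ℝ) (hl : 0 < l) (hy : 0 ≤ y) (hyx : y ≤ x) :
    (l*x - l*y)^3/(l*x)^2 = l * ((x-y)^3/x^2) := by
  rcases eq_or_lt_of_le (hy.trans hyx) with h0 | h0
  · have : y = 0 := le_antisymm (hyx.trans h0.symm.le) hy
    rw [← h0, this]; simp
  · field_simp

private lemma ups_core (m : ℕ) (hm : 0 < m) (M : ℝ) (hM : 3 ≤ M)
    (N0 N1 N2 a0 a1 a2 : ℝ)
    (ha0 : 0 ≤ a0) (ha1 : 0 ≤ a1) (ha2 : 0 ≤ a2)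
    (h0 : a0 ≤ N0) (h1 : a1 ≤ N1) (h2 : a2 ≤ N2)
    (hN : N0 ≤ N1 + N2) (ha : a0 ≤ a1 + a2) :
    (N0^(2*m) - a0^(2*m))^3 / N0^(4*m) + M * a0^(2*m)
      ≤ 2^(2*m-1) * (((N1^(2*m) - a1^(2*m))^3 / N1^(4*m) + M * a1^(2*m))
        + ((N2^(2*m) - a2^(2*m))^3 / N2^(4*m) + M * a2^(2*m))) := by
  have hp : ∀ N : ℝ, N^(4*m) = (N^(2*m))^2 := by
    intro N; rw [← pow_mul]; ring_nf
  rw [hp, hp, hp]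
  set x0 := N0^(2*m) with hx0def
  set x1 := N1^(2*m)
  set x2 := N2^(2*m)
  set y0 := a0^(2*m)
  set y1 := a1^(2*m)
  set y2 := a2^(2*m)
  set l : ℝ := 2^(2*m-1) with hl
  have hlpos : (0:ℝ) < l := by positivity
  have hN1 : 0 ≤ N1 := ha1.trans h1
  have hN2 : 0 ≤ N2 := ha2.trans h2
  have hN0 : 0 ≤ N0 := ha0.trans h0
  have hy0 : 0 ≤ y0 := by positivity
  have hy1 : 0 ≤ y1 := by positivity
  have hy2 : 0 ≤ y2 := by positivity
  have hyx0 : y0 ≤ x0 := pow_le_pow_left₀ ha0 h0 _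
  have hyx1 : y1 ≤ x1 := pow_le_pow_left₀ ha1 h1 _
  have hyx2 : y2 ≤ x2 := pow_le_pow_left₀ ha2 h2 _
  have hX : x0 ≤ l*(x1+x2) :=
    le_trans (pow_le_pow_left₀ hN0 hN _) (add_pow_le hN1 hN2 _)
  have hY : y0 ≤ l*(y1+y2) :=
    le_trans (pow_le_pow_left₀ ha0 ha _) (add_pow_le ha1 ha2 _)
  have hYX : l*(y1+y2) ≤ l*(x1+x2) :=
    mul_le_mul_of_nonneg_left (by linarith) hlpos.le
  calc (x0 - y0)^3/x0^2 + M*y0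
      ≤ (l*(x1+x2) - y0)^3/(l*(x1+x2))^2 + M*y0 := by
        have := ups_mono_x x0 (l*(x1+x2)) y0 hy0 hyx0 hX
        linarith
    _ ≤ (l*(x1+x2) - l*(y1+y2))^3/(l*(x1+x2))^2 + M*(l*(y1+y2)) :=
        ups_mono_y M (l*(x1+x2)) y0 (l*(y1+y2)) hM hy0 hY hYX
    _ = l * ((x1+x2 - (y1+y2))^3/(x1+x2)^2) + M*(l*(y1+y2)) := by
        rw [ups_homog l (x1+x2) (y1+y2) hlpos (by linarith) (by linarith)]
    _ ≤ l * ((x1-y1)^3/x1^2 + (x2-y2)^3/x2^2) + M*(l*(y1+y2)) := by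
        have := ups_subadd x1 x2 y1 y2 hy1 hy2 hyx1 hyx2
        nlinarith
    _ = l * (((x1 - y1)^3/x1^2 + M*y1) + ((x2-y2)^3/x2^2 + M*y2)) := by ring

private lemma ups_bdd_of_cadlag {d : ℕ} {t : ℝ} {γ : ℝ → E d} (ht : 0 ≤ t)
    (h : IsCadlagOn t γ) : BddAbove ((fun l => ‖γ l‖) '' Icc 0 t) := by
  set A : Set ℝ := {s | s ∈ Icc 0 t ∧ BddAbove ((fun l => ‖γ l‖) '' Icc 0 s)} with hA
  have h0A : (0:ℝ) ∈ A := ⟨⟨le_refl 0, ht⟩, by simp [Set.Icc_self]⟩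
  have hAne : A.Nonempty := ⟨0, h0A⟩
  have hAbdd : BddAbove A := ⟨t, fun s hs => hs.1.2⟩
  set c := sSup A with hc
  have hc0 : 0 ≤ c := le_csSup hAbdd h0A
  have hct : c ≤ t := csSup_le hAne (fun s hs => hs.1.2)
  have hcB : BddAbove ((fun l => ‖γ l‖) '' Icc 0 c) := by
    rcases eq_or_lt_of_le hc0 with hc' | hc'
    · rw [← hc']; simp [Set.Icc_self]
    · obtain ⟨L, hL⟩ := h.2 c ⟨hc', hct⟩
      have hev : {l | dist (γ l) L < 1} ∈ nhdsWithin c (Iio c) :=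
        hL (Metric.ball_mem_nhds L one_pos)
      obtain ⟨a, ha, hsub⟩ := mem_nhdsLT_iff_exists_Ioo_subset.1 hev
      have hmax : max a 0 < c := max_lt ha hc'
      obtain ⟨s₀, hs₀A, hs₀⟩ := exists_lt_of_lt_csSup hAne hmax
      obtain ⟨B, hB⟩ := hs₀A.2
      refine ⟨max B (max (‖L‖ + 1) ‖γ c‖), ?_⟩
      rintro v ⟨l, hl, rfl⟩
      rcases le_or_gt l s₀ with h' | h'
      · exact le_trans (hB ⟨l, ⟨hl.1, h'⟩, rfl⟩) (le_max_left _ _)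
      · rcases eq_or_lt_of_le hl.2 with hlc | hlc
        · rw [hlc]
          exact le_trans (le_max_right _ _) (le_max_right _ _)
        · have hal : a < l := lt_trans (lt_of_le_of_lt (le_max_left a 0) hs₀) h'
          have hd : dist (γ l) L < 1 := hsub ⟨hal, hlc⟩
          have : ‖γ l‖ ≤ ‖L‖ + 1 := by
            have h1 : ‖γ l - L‖ < 1 := by rwa [← dist_eq_norm]
            have := norm_sub_norm_le (γ l) L
            linarith
          exact le_trans this (le_trans (le_max_left _ _) (le_max_right _ _))
  have hct' : c = t := by
    by_contra hne
    have hclt : c < t := lt_of_le_of_ne hct hne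
    have hcont := h.1 c ⟨hc0, hclt⟩
    have hev : {l | dist (γ l) (γ c) < 1} ∈ nhdsWithin c (Ici c) :=
      hcont (Metric.ball_mem_nhds (γ c) one_pos)
    rw [Metric.mem_nhdsWithin_iff] at hev
    obtain ⟨δ, hδ, hsub⟩ := hev
    set s' := min (c + δ/2) t with hs'
    have hcs' : c < s' := lt_min (by linarith) hclt
    have hs'A : s' ∈ A := by
      refine ⟨⟨hc0.trans hcs'.le, min_le_right _ _⟩, ?_⟩
      obtain ⟨B, hB⟩ := hcB
      refine ⟨max B (‖γ c‖ + 1), ?_⟩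
      rintro v ⟨l, hl, rfl⟩
      rcases le_or_gt l c with h' | h'
      · exact le_trans (hB ⟨l, ⟨hl.1, h'⟩, rfl⟩) (le_max_left _ _)
      · have hlb : dist l c < δ := by
          rw [Real.dist_eq, abs_of_nonneg (by linarith)]
          have : l ≤ c + δ/2 := hl.2.trans (min_le_left _ _)
          linarith
        have hd : dist (γ l) (γ c) < 1 := hsub ⟨hlb, h'.le⟩
        have : ‖γ l‖ ≤ ‖γ c‖ + 1 := by
          have h1 : ‖γ l - γ c‖ < 1 := by rwa [← dist_eq_norm]
          have := norm_sub_norm_le (γ l) (γ c)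
          linarith
        exact le_trans this (le_max_right _ _)
    exact absurd (le_csSup hAbdd hs'A) (not_le.2 hcs')
  rw [← hct']
  exact hcB

private lemma ups_pairDist_zero {d : ℕ} (t : ℝ) (ht : 0 ≤ t) (γ : ℝ → E d) :
    pairDist t γ t (fun _ => 0) = sSup ((fun l => ‖γ l‖) '' Icc 0 t) := by
  unfold pairDist
  rw [max_self]
  congr 1
  apply Set.image_congr
  intro l hl
  simp [min_eq_left hl.2]

end UpsAux

/-- `Υ^{m,M}(γ_t + η_t) ≤ 2^{2m-1}(Υ^{m,M}(γ_t) + Υ^{m,M}(η_t))`. -/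
theorem ups_subadditive
    {d : ℕ} (T : ℝ) (hT : 0 < T) (m : ℕ) (hm : 0 < m) (M : ℝ) (hM : 3 ≤ M)
    (t : ℝ) (γ η : ℝ → E d) (hγ : MemHat T 0 t γ) (hη : MemHat T 0 t η) :
    Ups0 m M t (fun s => γ s + η s) ≤ 2 ^ (2*m - 1) * (Ups0 m M t γ + Ups0 m M t η) := by
  have ht : 0 ≤ t := hγ.1
  set N1 := sSup ((fun l => ‖γ l‖) '' Icc 0 t) with hN1def
  set N2 := sSup ((fun l => ‖η l‖) '' Icc 0 t) with hN2def
  set N0 := sSup ((fun l => ‖γ l + η l‖) '' Icc 0 t) with hN0def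
  have hB1 : BddAbove ((fun l => ‖γ l‖) '' Icc 0 t) := ups_bdd_of_cadlag ht hγ.2.2
  have hB2 : BddAbove ((fun l => ‖η l‖) '' Icc 0 t) := ups_bdd_of_cadlag ht hη.2.2
  have htmem : t ∈ Icc (0:ℝ) t := ⟨ht, le_refl t⟩
  have ha1 : ‖γ t‖ ≤ N1 := le_csSup hB1 ⟨t, htmem, rfl⟩
  have ha2 : ‖η t‖ ≤ N2 := le_csSup hB2 ⟨t, htmem, rfl⟩
  have hmem0 : ∀ l ∈ Icc (0:ℝ) t, ‖γ l + η l‖ ≤ N1 + N2 := fun l hl =>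
    le_trans (norm_add_le _ _)
      (add_le_add (le_csSup hB1 ⟨l, hl, rfl⟩) (le_csSup hB2 ⟨l, hl, rfl⟩))
  have hB0 : BddAbove ((fun l => ‖γ l + η l‖) '' Icc 0 t) := by
    refine ⟨N1 + N2, ?_⟩
    rintro v ⟨l, hl, rfl⟩
    exact hmem0 l hl
  have ha0 : ‖γ t + η t‖ ≤ N0 := le_csSup hB0 ⟨t, htmem, rfl⟩
  have hNsum : N0 ≤ N1 + N2 := csSup_le ⟨‖γ t + η t‖, t, htmem, rfl⟩ (by
    rintro v ⟨l, hl, rfl⟩; exact hmem0 l hl)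
  have hpd : ∀ ξ : ℝ → E d, pairDist t ξ t (fun _ => 0)
      = sSup ((fun l => ‖ξ l‖) '' Icc 0 t) := fun ξ => ups_pairDist_zero t ht ξ
  have hSm : ∀ (ξ : ℝ → E d) (N : ℝ), N = sSup ((fun l => ‖ξ l‖) '' Icc 0 t) →
      ‖ξ t‖ ≤ N → Sm m t ξ t (fun _ => 0)
        = (N^(2*m) - ‖ξ t - 0‖^(2*m))^3 / N^(4*m) := by
    intro ξ N hN haN
    unfold Sm
    rw [hpd ξ, ← hN, sub_zero]
    split_ifs with hz
    · have hξ0 : ‖ξ t‖ = 0 := le_antisymm (hz ▸ haN) (norm_nonneg _)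
      rw [hz, hξ0]
      simp [zero_pow, (by omega : 2*m ≠ 0), (by omega : 4*m ≠ 0)]
    · rfl
  have hU : ∀ (ξ : ℝ → E d) (N : ℝ), N = sSup ((fun l => ‖ξ l‖) '' Icc 0 t) →
      ‖ξ t‖ ≤ N → Ups0 m M t ξ
        = (N^(2*m) - ‖ξ t‖^(2*m))^3 / N^(4*m) + M * ‖ξ t‖^(2*m) := by
    intro ξ N hN haN
    unfold Ups0 Ups
    rw [hSm ξ N hN haN, sub_zero]
  rw [hU γ N1 hN1def ha1, hU η N2 hN2def ha2,
    hU (fun s => γ s + η s) N0 hN0def ha0]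
  exact ups_core m hm M hM N0 N1 N2 ‖γ t + η t‖ ‖γ t‖ ‖η t‖
    (norm_nonneg _) (norm_nonneg _) (norm_nonneg _)
    ha0 ha1 ha2 hNsum (norm_add_le _ _)
end PHJB
end
end
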